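/- arXiv:1111.0450 — 8 statements merged into one kernel-verified Lean document; each statement's English description precedes it below -/
import Mathlib

section
/- Let Φ be a root system and let {γ_1, ..., γ_n} ⊆ Φ be a Z-basis of the root lattice ZΦ. Let W' be the subgroup of the Weyl group generated by the reflections s_{γ_1}, ..., s_{γ_n}. Then for every root α ∈ Φ there exist w ∈ W' and an index i such that α = w(γ_i). -/
open scoped RealInnerProductSpace

/-- If `{γ_1, ..., γ_n} ⊆ Φ` is a `ℤ`-basis of the root lattice of a
simply-laced root system `Φ` (roots of squared length 2), then every root `α ∈ Φ`
is of the form `w(γ_i)` for some `w` in the subgroup `W'` of the Weyl group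
generated by the reflections `s_{γ_1}, ..., s_{γ_n}` (an element of `W'` being a
word in these involutive generators) and some index `i`. -/
theorem stmt3 {V : Type*} [NormedAddCommGroup V] [InnerProductSpace ℝ V]
    (Φ : Set V)
    (hlen : ∀ α ∈ Φ, ⟪α, α⟫ = 2)
    (hrefl : ∀ α ∈ Φ, ∀ β ∈ Φ, β - ⟪β, α⟫ • α ∈ Φ)
    {n : ℕ} (γ : Fin n → V) (hγΦ : ∀ i, γ i ∈ Φ)
    (hli : LinearIndependent ℝ γ)
    (hspan : ∀ α ∈ Φ, ∃ c : Fin n → ℤ, α = ∑ i, (c i : ℝ) • γ i)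
    {α : V} (hα : α ∈ Φ) :
    ∃ (l : List (Fin n)) (i : Fin n),
      α = l.foldr (fun j v => v - ⟪v, γ j⟫ • γ j) (γ i) := by
  classical
  -- uniqueness of real coefficients
  have huniq : ∀ f g : Fin n → ℝ,
      ∑ i, f i • γ i = ∑ i, g i • γ i → ∀ i, f i = g i := by
    intro f g h i
    have h0 : ∑ i, (f - g) i • γ i = 0 := by
      simp only [Pi.sub_apply, sub_smul, Finset.sum_sub_distrib, h, sub_self]
    have := Fintype.linearIndependent_iff.mp hli (f - g) h0 i
    simpa [sub_eq_zero] using this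
  -- integrality of inner products with basis roots
  have hint : ∀ β ∈ Φ, ∀ i : Fin n, ∃ t : ℤ, ⟪β, γ i⟫ = (t : ℝ) := by
    intro β hβ i
    obtain ⟨c, hc⟩ := hspan β hβ
    obtain ⟨d, hd⟩ := hspan _ (hrefl (γ i) (hγΦ i) β hβ)
    refine ⟨c i - d i, ?_⟩
    have key : ∑ k, ((c k : ℝ) - (if k = i then ⟪β, γ i⟫ else 0)) • γ k
        = ∑ k, (d k : ℝ) • γ k := by
      rw [← hd]
      simp only [sub_smul, Finset.sum_sub_distrib, ← hc]
      congr 1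
      simp [ite_smul, Finset.sum_ite_eq']
    have := huniq _ _ key i
    norm_num at this
    push_cast
    linarith
  -- main induction on height
  suffices H : ∀ N : ℕ, ∀ β, β ∈ Φ → ∀ c : Fin n → ℤ,
      β = ∑ i, (c i : ℝ) • γ i → ∑ i, (c i).natAbs ≤ N →
      ∃ (l : List (Fin n)) (i : Fin n),
        β = l.foldr (fun j v => v - ⟪v, γ j⟫ • γ j) (γ i) by
    obtain ⟨c, hc⟩ := hspan α hα
    exact H _ α hα c hc le_rfl
  intro N
  induction N with
  | zero =>
    intro β hβ c hc hN
    have hc0 : ∀ i, c i = 0 := by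
      intro i
      have := Finset.sum_eq_zero_iff.mp (Nat.le_zero.mp hN) i (Finset.mem_univ i)
      omega
    have hβ0 : β = 0 := by
      rw [hc]
      apply Finset.sum_eq_zero
      intro i _
      simp [hc0 i]
    exfalso
    have h2 := hlen β hβ
    rw [hβ0] at h2
    norm_num [inner_zero_left] at h2
  | succ N ih =>
    intro β hβ c hc hN
    choose T hT using hint β hβ
    -- 2 = ∑ c i * T i
    have h2' : (2 : ℤ) = ∑ i, c i * T i := by
      have hr : (2 : ℝ) = ∑ i, (c i : ℝ) * (T i : ℝ) := by
        have hinner : ⟪β, β⟫ = ∑ i, (c i : ℝ) * ⟪β, γ i⟫ := by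
          conv_lhs => rw [show ⟪β, β⟫ = ⟪β, ∑ i, (c i : ℝ) • γ i⟫ by rw [← hc]]
          simp [inner_sum, real_inner_smul_right, mul_comm]
        rw [hlen β hβ] at hinner
        rw [hinner]
        exact Finset.sum_congr rfl fun i _ => by rw [hT i]
      exact_mod_cast hr
    -- some index with positive contribution
    have hex : ∃ i, 0 < c i * T i := by
      by_contra hcon
      push_neg at hcon
      have : ∑ i, c i * T i ≤ 0 := Finset.sum_nonpos fun i _ => hcon i
      omega
    obtain ⟨i, hi⟩ := hex
    -- Cauchy-Schwarz bound
    have hb : T i * T i ≤ 4 := by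
      have := real_inner_mul_inner_self_le β (γ i)
      rw [hT i, hlen β hβ, hlen (γ i) (hγΦ i)] at this
      exact_mod_cast this
    have hTne : T i ≠ 0 := by rintro h0; rw [h0, mul_zero] at hi; exact lt_irrefl 0 hi
    have hlow : -2 ≤ T i := by nlinarith
    have hhigh : T i ≤ 2 := by nlinarith
    have hγγ : ⟪γ i, γ i⟫ = 2 := hlen (γ i) (hγΦ i)
    have hrange : T i = -2 ∨ T i = 2 ∨ (T i = 1 ∨ T i = -1) := by omega
    rcases hrange with h | h | ht
    · -- T i = -2 : β = -γ i
      have hz : ⟪β + γ i, β + γ i⟫ = 0 := by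
        have hsym : ⟪γ i, β⟫ = ⟪β, γ i⟫ := real_inner_comm _ _
        simp only [inner_add_left, inner_add_right]
        rw [hlen β hβ, hγγ, hsym, hT i, h]
        push_cast
        ring
      have hβγ : β = -(γ i) := eq_neg_of_add_eq_zero_left (inner_self_eq_zero.mp hz)
      refine ⟨[i], i, ?_⟩
      simp only [List.foldr, hγγ]
      rw [hβγ]
      module
    · -- T i = 2 : β = γ i
      have hz : ⟪β - γ i, β - γ i⟫ = 0 := by
        have hsym : ⟪γ i, β⟫ = ⟪β, γ i⟫ := real_inner_comm _ _
        simp only [inner_sub_left, inner_sub_right]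
        rw [hlen β hβ, hγγ, hsym, hT i, h]
        push_cast
        ring
      exact ⟨[], i, sub_eq_zero.mp (inner_self_eq_zero.mp hz)⟩
    · -- T i = ±1 : reflect and use induction
      set β' := β - (T i : ℝ) • γ i with hβ'def
      have hβ'Φ : β' ∈ Φ := by
        have := hrefl (γ i) (hγΦ i) β hβ
        rwa [hT i] at this
      set c' : Fin n → ℤ := Function.update c i (c i - T i) with hc'
      have hc'exp : β' = ∑ k, (c' k : ℝ) • γ k := by
        have hterm : ∀ k, ((c' k : ℝ)) • γ k
            = (c k : ℝ) • γ k - (if k = i then (T i : ℝ) else 0) • γ k := by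
          intro k
          by_cases hk : k = i
          · subst hk
            simp only [hc', Function.update_self, if_pos rfl]
            push_cast
            rw [← sub_smul]
          · simp [hc', Function.update_of_ne hk, hk]
        rw [Finset.sum_congr rfl (fun k _ => hterm k), Finset.sum_sub_distrib]
        rw [hβ'def, hc]
        congr 1
        symm
        simp [ite_smul, Finset.sum_ite_eq']
      have hht : ∑ k, (c' k).natAbs ≤ N := by
        have h1 : ∑ k, (c' k).natAbs
            = (c i - T i).natAbs + ∑ k ∈ Finset.univ.erase i, (c k).natAbs := by
          rw [← Finset.add_sum_erase Finset.univ (fun k => (c' k).natAbs) (Finset.mem_univ i)]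
          congr 1
          · simp [hc']
          · exact Finset.sum_congr rfl fun k hk => by
              simp [hc', Function.update_of_ne (Finset.ne_of_mem_erase hk)]
        have h2 : ∑ k, (c k).natAbs
            = (c i).natAbs + ∑ k ∈ Finset.univ.erase i, (c k).natAbs :=
          (Finset.add_sum_erase Finset.univ (fun k => (c k).natAbs) (Finset.mem_univ i)).symm
        have h3 : (c i - T i).natAbs + 1 = (c i).natAbs := by
          rcases ht with h | h <;> rw [h] at hi ⊢ <;> omega
        rw [h2] at hN
        omega
      obtain ⟨l, j, hl⟩ := ih β' hβ'Φ c' hc'exp hht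
      refine ⟨i :: l, j, ?_⟩
      simp only [List.foldr]
      rw [← hl]
      have hb'γ : ⟪β', γ i⟫ = -(T i : ℝ) := by
        rw [hβ'def]
        simp only [inner_sub_left, real_inner_smul_left, hT i, hγγ]
        ring
      rw [hb'γ, hβ'def]
      module
end

section
/- Let Φ be a simply-laced root system with all roots of squared length 2. If α and β are positive roots, written α = Σ a_i γ_i and β = Σ b_i γ_i in terms of a Z-basis {γ_1, ..., γ_n} ⊆ Φ of ZΦ, and |a_i| = |b_i| for all i, then α = β. -/
open scoped RealInnerProductSpace

private lemma even_quad {n : ℕ} (m : Fin n → Fin n → ℤ) (hsymm : ∀ i j, m i j = m j i)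
    (hdiag : ∀ i, Even (m i i)) (c : Fin n → ℤ) :
    Even (∑ i, ∑ j, c i * c j * m i j) := by
  have key : ((∑ i, ∑ j, c i * c j * m i j : ℤ) : ZMod 2) = 0 := by
    push_cast
    rw [← Finset.sum_product']
    refine Finset.sum_involution (fun p _ => p.swap) ?_ ?_ (fun p hp => Finset.mem_univ _) ?_
    · intro p hp
      have : ((c p.swap.1 : ZMod 2)) * c p.swap.2 * m p.swap.1 p.swap.2
          = (c p.1 : ZMod 2) * c p.2 * m p.1 p.2 := by
        simp only [Prod.fst_swap, Prod.snd_swap, hsymm p.2 p.1]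
        ring
      rw [this, CharTwo.add_self_eq_zero]
    · intro p hp hne
      intro hswap
      apply hne
      have h1 : p.2 = p.1 := congrArg Prod.fst hswap
      obtain ⟨r, hr⟩ := hdiag p.1
      have : (m p.1 p.1 : ZMod 2) = 0 := by
        rw [hr]; push_cast; exact CharTwo.add_self_eq_zero _
      rw [h1, this, mul_zero]
    · intro p hp; exact Prod.swap_swap p
  have hdvd := (ZMod.intCast_zmod_eq_zero_iff_dvd _ 2).mp key
  rw [even_iff_two_dvd]
  exact_mod_cast hdvd

/-- If two positive roots of a simply-laced root system have
coefficient vectors with the same absolute values with respect to a `ℤ`-basis of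
roots of the root lattice, then the two roots are equal. -/
theorem stmt5 {V : Type*} [NormedAddCommGroup V] [InnerProductSpace ℝ V]
    (Φ : Set V)
    (hlen : ∀ α ∈ Φ, ⟪α, α⟫ = 2)
    (hcrys : ∀ α ∈ Φ, ∀ β ∈ Φ, ∃ m : ℤ, ⟪α, β⟫ = m)
    {n : ℕ} (γ : Fin n → V) (hγΦ : ∀ i, γ i ∈ Φ)
    (hli : LinearIndependent ℝ γ)
    (hspan : ∀ α ∈ Φ, ∃ c : Fin n → ℤ, α = ∑ i, (c i : ℝ) • γ i)
    (Pos : Set V) (hPosΦ : Pos ⊆ Φ)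
    (hPos : ∀ α ∈ Φ, α ∈ Pos ∨ -α ∈ Pos)
    (hPosdisj : ∀ α ∈ Pos, -α ∉ Pos)
    {α β : V} (hα : α ∈ Pos) (hβ : β ∈ Pos)
    (a b : Fin n → ℤ)
    (ha : α = ∑ i, (a i : ℝ) • γ i) (hb : β = ∑ i, (b i : ℝ) • γ i)
    (habs : ∀ i, |a i| = |b i|) :
    α = β := by
  classical
  -- the Gram matrix
  have hm : ∀ i j, ∃ m : ℤ, ⟪γ i, γ j⟫ = m := fun i j => hcrys _ (hγΦ i) _ (hγΦ j)
  set m : Fin n → Fin n → ℤ := fun i j => (hm i j).choose with hmdef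
  have hmspec : ∀ i j, ⟪γ i, γ j⟫ = (m i j : ℝ) := fun i j => (hm i j).choose_spec
  have hsymm : ∀ i j, m i j = m j i := by
    intro i j
    have : (m i j : ℝ) = (m j i : ℝ) := by
      rw [← hmspec, ← hmspec, real_inner_comm]
    exact_mod_cast this
  have hdiag : ∀ i, m i i = 2 := by
    intro i
    have : (m i i : ℝ) = (2 : ℝ) := by rw [← hmspec]; exact hlen _ (hγΦ i)
    exact_mod_cast this
  -- inner product of lattice vectors
  have hinner : ∀ c : Fin n → ℤ,
      ⟪∑ i, (c i : ℝ) • γ i, ∑ i, (c i : ℝ) • γ i⟫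
        = ((∑ i, ∑ j, c i * c j * m i j : ℤ) : ℝ) := by
    intro c
    rw [sum_inner]
    push_cast
    refine Finset.sum_congr rfl fun i _ => ?_
    rw [inner_sum]
    refine Finset.sum_congr rfl fun j _ => ?_
    rw [real_inner_smul_left, real_inner_smul_right, hmspec]
    ring
  -- lattice vectors have even norm, and ≥ 2 if nonzero
  have hkey : ∀ c : Fin n → ℤ, (∑ i, (c i : ℝ) • γ i ≠ 0) →
      (2 : ℝ) ≤ ⟪∑ i, (c i : ℝ) • γ i, ∑ i, (c i : ℝ) • γ i⟫ := by
    intro c hne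
    rw [hinner]
    have heven : Even (∑ i, ∑ j, c i * c j * m i j) :=
      even_quad m hsymm (fun i => by rw [hdiag]; exact even_two) c
    have hpos : (0 : ℝ) < ((∑ i, ∑ j, c i * c j * m i j : ℤ) : ℝ) := by
      rw [← hinner]
      have h0 : ⟪∑ i, (c i : ℝ) • γ i, ∑ i, (c i : ℝ) • γ i⟫ ≠ 0 :=
        fun h => hne (inner_self_eq_zero.mp h)
      exact lt_of_le_of_ne real_inner_self_nonneg (Ne.symm h0)
    have hposZ : 0 < (∑ i, ∑ j, c i * c j * m i j : ℤ) := by exact_mod_cast hpos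
    have : (2 : ℤ) ≤ ∑ i, ∑ j, c i * c j * m i j := by
      obtain ⟨r, hr⟩ := heven; omega
    exact_mod_cast this
  -- halved coefficients
  have hcases : ∀ i, a i = b i ∨ a i = -b i := fun i => abs_eq_abs.mp (habs i)
  have hdvd1 : ∀ i, (2 : ℤ) ∣ (a i - b i) := by
    intro i; rcases hcases i with h | h <;> omega
  have hdvd2 : ∀ i, (2 : ℤ) ∣ (a i + b i) := by
    intro i; rcases hcases i with h | h <;> omega
  set u : Fin n → ℤ := fun i => (a i - b i) / 2 with hu
  set v : Fin n → ℤ := fun i => (a i + b i) / 2 with hv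
  have hu2 : ∀ i, 2 * u i = a i - b i := fun i => Int.mul_ediv_cancel' (hdvd1 i)
  have hv2 : ∀ i, 2 * v i = a i + b i := fun i => Int.mul_ediv_cancel' (hdvd2 i)
  have huv : ∀ i, u i + v i = a i := by intro i; have := hu2 i; have := hv2 i; omega
  have hvu : ∀ i, v i - u i = b i := by intro i; have := hu2 i; have := hv2 i; omega
  set x := ∑ i, (u i : ℝ) • γ i with hx
  set y := ∑ i, (v i : ℝ) • γ i with hy
  have hαxy : α = x + y := by
    rw [ha, hx, hy, ← Finset.sum_add_distrib]
    refine Finset.sum_congr rfl fun i _ => ?_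
    rw [← add_smul]
    congr 1
    rw [← huv i]; push_cast; ring
  have hβxy : β = y - x := by
    rw [hb, hx, hy, ← Finset.sum_sub_distrib]
    refine Finset.sum_congr rfl fun i _ => ?_
    rw [← sub_smul]
    congr 1
    rw [← hvu i]; push_cast; ring
  have hαlen : ⟪α, α⟫ = 2 := hlen _ (hPosΦ hα)
  have hβlen : ⟪β, β⟫ = 2 := hlen _ (hPosΦ hβ)
  -- orthogonality and norm sum
  have hexp1 : ⟪x, x⟫ + 2 * ⟪x, y⟫ + ⟪y, y⟫ = 2 := by
    have := hαlen
    rw [hαxy, real_inner_add_add_self] at this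
    linarith
  have hexp2 : ⟪y, y⟫ - 2 * ⟪y, x⟫ + ⟪x, x⟫ = 2 := by
    have := hβlen
    rw [hβxy, real_inner_sub_sub_self] at this
    linarith
  have hcomm : ⟪y, x⟫ = ⟪x, y⟫ := real_inner_comm x y
  have hsum : ⟪x, x⟫ + ⟪y, y⟫ = 2 := by rw [← hcomm] at hexp1; linarith
  have hxnn : (0 : ℝ) ≤ ⟪x, x⟫ := real_inner_self_nonneg
  have hynn : (0 : ℝ) ≤ ⟪y, y⟫ := real_inner_self_nonneg
  -- one of x, y must vanish
  by_cases hx0 : x = 0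
  · -- then α = β? α = x + y = y, β = y - x = y
    rw [hαxy, hβxy, hx0]; abel
  · by_cases hy0 : y = 0
    · -- α = x, β = -x, contradiction
      exfalso
      have hβα : β = -α := by rw [hαxy, hβxy, hy0]; abel
      exact hPosdisj α hα (hβα ▸ hβ)
    · exfalso
      have h1 : (2 : ℝ) ≤ ⟪x, x⟫ := hkey u hx0
      have h2 : (2 : ℝ) ≤ ⟪y, y⟫ := hkey v hy0
      linarith
end

section
/- Let γ_{x_0}, γ_{x_1}, ..., γ_{x_t} be roots in a simply-laced root system (roots of squared length 2) such that (γ_{x_i}, γ_{x_j}) = ±1 if |i - j| = 1 and (γ_{x_i}, γ_{x_j}) = 0 if |i - j| ≥ 2 (for i ≠ j). Then for each 1 ≤ r ≤ t, s_{γ_{x_r}} ⋯ s_{γ_{x_1}}(γ_{x_0}) = γ_{x_0} + Σ_{k=1}^{r} (-1)^k (∏_{l=1}^{k} (γ_{x_l}, γ_{x_{l-1}})) γ_{x_k}. -/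
open scoped RealInnerProductSpace

/-- `sref γ v = s_γ(v) = v - (v, γ) γ`, the reflection in a root `γ` of squared
length 2. -/
noncomputable def sref {V : Type*} [NormedAddCommGroup V] [InnerProductSpace ℝ V]
    (γ v : V) : V := v - ⟪v, γ⟫ • γ

/-- `applySeq γ r v = s_{γ_r} ∘ ⋯ ∘ s_{γ_1} (v)`. -/
noncomputable def applySeq {V : Type*} [NormedAddCommGroup V] [InnerProductSpace ℝ V]
    (γ : ℕ → V) : ℕ → V → V
  | 0, v => v
  | r + 1, v => sref (γ (r + 1)) (applySeq γ r v)

/-- For a "path" of roots `γ_0, ..., γ_t` (squared length 2,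
consecutive inner products `±1`, non-consecutive orthogonal),
`s_{γ_r} ⋯ s_{γ_1}(γ_0) = γ_0 + Σ_{k=1}^{r} (-1)^k (∏_{l=1}^{k} (γ_l, γ_{l-1})) γ_k`
for each `1 ≤ r ≤ t`. -/
theorem stmt7 {V : Type*} [NormedAddCommGroup V] [InnerProductSpace ℝ V]
    (γ : ℕ → V) (t : ℕ)
    (hlen : ∀ i, i ≤ t → ⟪γ i, γ i⟫ = 2)
    (hadj : ∀ i, i + 1 ≤ t → ⟪γ (i + 1), γ i⟫ = 1 ∨ ⟪γ (i + 1), γ i⟫ = -1)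
    (horth : ∀ i j, i + 2 ≤ j → j ≤ t → ⟪γ j, γ i⟫ = 0)
    (r : ℕ) (hr1 : 1 ≤ r) (hrt : r ≤ t) :
    applySeq γ r (γ 0) =
      γ 0 + ∑ k ∈ Finset.Icc 1 r,
        ((-1 : ℝ) ^ k * ∏ l ∈ Finset.Icc 1 k, ⟪γ l, γ (l - 1)⟫) • γ k := by

  induction r, hr1 using Nat.le_induction with
  | base =>
    simp only [applySeq, sref, Finset.Icc_self, Finset.sum_singleton, pow_one,
      Finset.prod_singleton, real_inner_comm (γ 0) (γ 1)]
    module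
  | succ r hr ih =>
    have hrt' : r ≤ t := Nat.le_of_succ_le hrt
    have hA := ih hrt'
    show sref (γ (r+1)) (applySeq γ r (γ 0)) = _
    rw [hA, sref]
    have h0 : ⟪γ 0, γ (r+1)⟫ = 0 := by
      rw [real_inner_comm]; exact horth 0 (r+1) (by omega) hrt
    have hin : ⟪γ 0 + ∑ k ∈ Finset.Icc 1 r,
        ((-1 : ℝ) ^ k * ∏ l ∈ Finset.Icc 1 k, ⟪γ l, γ (l - 1)⟫) • γ k, γ (r+1)⟫ =
        ((-1 : ℝ) ^ r * ∏ l ∈ Finset.Icc 1 r, ⟪γ l, γ (l - 1)⟫) * ⟪γ (r+1), γ r⟫ := by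
      rw [inner_add_left, sum_inner, h0, zero_add]
      rw [Finset.sum_eq_single r]
      · rw [real_inner_smul_left, real_inner_comm]
      · intro k hk hkr
        rw [real_inner_smul_left, real_inner_comm,
          horth k (r+1) (by simp at hk; omega) hrt, mul_zero]
      · intro h; exact absurd (Finset.mem_Icc.mpr ⟨hr, le_refl r⟩) h
    rw [hin, Finset.sum_Icc_succ_top (by omega : 1 ≤ r + 1)]
    rw [Finset.prod_Icc_succ_top (by omega : 1 ≤ r + 1)]
    have : (r + 1 - 1) = r := rfl
    rw [this, pow_succ]
    module
end

section
/- Let Q_T be the quiver associated to a triangulation T of a regular (n+3)-gon by non-crossing diagonals. Then the only cycles in the underlying unoriented graph of Q_T are 3-cycles arising from internal triangles of T (triangles all of whose three sides are diagonals). -/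
/-- One chord `{a,b}` of a convex polygon (vertices labelled `0, ..., m-1` in
order) crosses another chord `{c,d}` "starting first": `a < c < b < d`. -/
def CrossAux {m : ℕ} (p q : Sym2 (Fin m)) : Prop :=
  ∃ a b c d : Fin m, p = s(a, b) ∧ q = s(c, d) ∧ a < c ∧ c < b ∧ b < d

/-- Two chords of a convex polygon cross (have a common interior point). -/
def Crosses {m : ℕ} (p q : Sym2 (Fin m)) : Prop := CrossAux p q ∨ CrossAux q p

/-- `{a, a+1}` (indices mod `m`) is a boundary edge of the polygon. -/
def IsBoundaryEdge {m : ℕ} [NeZero m] (p : Sym2 (Fin m)) : Prop :=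
  ∃ a : Fin m, p = s(a, a + 1)

/-- A diagonal: a pair of distinct, non-adjacent vertices of the polygon. -/
def IsDiagonal {m : ℕ} [NeZero m] (p : Sym2 (Fin m)) : Prop :=
  ¬ p.IsDiag ∧ ¬ IsBoundaryEdge p

/-- A side of a triangle of the triangulation `T`: a diagonal of `T` or a
boundary edge. -/
def IsSide {m : ℕ} [NeZero m] (T : Finset (Sym2 (Fin m))) (p : Sym2 (Fin m)) : Prop :=
  p ∈ T ∨ IsBoundaryEdge p

/-- `a, b, c` span a triangle of the triangulation `T`: they are distinct and
all three sides are diagonals of `T` or boundary edges. -/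
def IsTriangle {m : ℕ} [NeZero m] (T : Finset (Sym2 (Fin m))) (a b c : Fin m) : Prop :=
  a ≠ b ∧ b ≠ c ∧ a ≠ c ∧ IsSide T s(a, b) ∧ IsSide T s(b, c) ∧ IsSide T s(a, c)

/-- The underlying (unoriented) graph of the quiver `Q_T` of the triangulation
`T`: vertices are the diagonals of `T`, and two distinct diagonals are adjacent
iff they bound a common triangle of `T`. -/
def QT {m : ℕ} [NeZero m] (T : Finset (Sym2 (Fin m))) :
    SimpleGraph {p : Sym2 (Fin m) // p ∈ T} :=
  SimpleGraph.fromRel (fun d e => ∃ a b c : Fin m, IsTriangle T a b c ∧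
    (d : Sym2 (Fin m)) ∈ ({s(a, b), s(b, c), s(a, c)} : Set (Sym2 (Fin m))) ∧
    (e : Sym2 (Fin m)) ∈ ({s(a, b), s(b, c), s(a, c)} : Set (Sym2 (Fin m))))

namespace Stmt10

variable {m : ℕ} [NeZero m] {T : Finset (Sym2 (Fin m))}

/-- The set of the three sides of the triangle with vertices `α β γ`. -/
def SSet (α β γ : Fin m) : Set (Sym2 (Fin m)) := {s(α, β), s(β, γ), s(α, γ)}

lemma val_succ (a : Fin m) : (a+1).val = a.val + 1 ∨ (a.val = m - 1 ∧ (a+1).val = 0) := by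
  obtain ⟨k, rfl⟩ : ∃ k, m = k + 1 := ⟨m - 1, (Nat.succ_pred_eq_of_pos (NeZero.pos m)).symm⟩
  rcases eq_or_ne a (Fin.last k) with rfl | h
  · right; simp [Fin.val_add_one]
  · left; simp [Fin.val_add_one, h]

lemma not_cross_left {p q : Sym2 (Fin m)} (hb : IsBoundaryEdge p) : ¬ CrossAux p q := by
  rintro ⟨a, b, c, d, rfl, rfl, h1, h2, h3⟩
  obtain ⟨e, he⟩ := hb
  have hd := d.isLt
  rw [Sym2.eq_iff] at he
  rcases he with ⟨rfl, rfl⟩ | ⟨rfl, rfl⟩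
  · rcases val_succ a with h | ⟨h, h'⟩ <;>
      simp only [Fin.lt_def] at h1 h2 h3 <;> omega
  · rcases val_succ b with h | ⟨h, h'⟩ <;>
      simp only [Fin.lt_def] at h1 h2 h3 <;> omega

lemma not_cross_right {p q : Sym2 (Fin m)} (hb : IsBoundaryEdge q) : ¬ CrossAux p q := by
  rintro ⟨a, b, c, d, rfl, rfl, h1, h2, h3⟩
  obtain ⟨e, he⟩ := hb
  have ha := a.isLt
  rw [Sym2.eq_iff] at he
  rcases he with ⟨rfl, rfl⟩ | ⟨rfl, rfl⟩
  · rcases val_succ c with h | ⟨h, h'⟩ <;>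
      simp only [Fin.lt_def] at h1 h2 h3 <;> omega
  · rcases val_succ d with h | ⟨h, h'⟩ <;>
      simp only [Fin.lt_def] at h1 h2 h3 <;> omega

variable (hnc : ∀ p ∈ T, ∀ q ∈ T, ¬ Crosses p q)

lemma crossAux_mk {a b c d : Fin m} (h1 : a < c) (h2 : c < b) (h3 : b < d) :
    CrossAux s(a, b) s(c, d) := ⟨a, b, c, d, rfl, rfl, h1, h2, h3⟩

include hnc in
lemma noCrossSides {p q : Sym2 (Fin m)} (hp : IsSide T p) (hq : IsSide T q) :
    ¬ CrossAux p q := by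
  rcases hp with hp | hp
  · rcases hq with hq | hq
    · intro h; exact hnc p hp q hq (Or.inl h)
    · exact not_cross_right hq
  · exact not_cross_left hp

/-- `Inside a b p`: both endpoints of the chord `p` lie in the closed arc `[a,b]`. -/
def Inside (a b : Fin m) (p : Sym2 (Fin m)) : Prop := ∀ v ∈ p, a ≤ v ∧ v ≤ b

lemma inside_mk {a b x y : Fin m} :
    Inside a b s(x, y) ↔ (a ≤ x ∧ x ≤ b) ∧ (a ≤ y ∧ y ≤ b) := by
  constructor
  · intro h; exact ⟨h x (Sym2.mem_mk_left x y), h y (Sym2.mem_mk_right x y)⟩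
  · rintro ⟨hx, hy⟩ v hv
    rcases Sym2.mem_iff.mp hv with rfl | rfl <;> assumption

include hnc in
lemma chord_in {a b u w : Fin m} (hab : a < b) (hsab : IsSide T s(a, b))
    (hsuw : IsSide T s(u, w)) (h1 : a < u) (h2 : u < b) : a ≤ w ∧ w ≤ b := by
  constructor
  · by_contra hc
    push_neg at hc
    have hsw : IsSide T s(w, u) := by rwa [Sym2.eq_swap] at hsuw
    exact noCrossSides hnc hsw hsab (crossAux_mk hc h1 h2)
  · by_contra hc
    push_neg at hc
    exact noCrossSides hnc hsab hsuw (crossAux_mk h1 h2 hc)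

include hnc in
lemma sep {α β γ a b : Fin m} (htri : IsTriangle T α β γ) (hab : a < b)
    (hsab : IsSide T s(a, b)) :
    ((a ≤ α ∧ α ≤ b) ∧ (a ≤ β ∧ β ≤ b) ∧ (a ≤ γ ∧ γ ≤ b)) ∨
      (¬(a < α ∧ α < b) ∧ ¬(a < β ∧ β < b) ∧ ¬(a < γ ∧ γ < b)) := by
  obtain ⟨t1, t2, t3, s1, s2, s3⟩ := htri
  have s1' : IsSide T s(β, α) := by rwa [Sym2.eq_swap] at s1
  have s2' : IsSide T s(γ, β) := by rwa [Sym2.eq_swap] at s2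
  have s3' : IsSide T s(γ, α) := by rwa [Sym2.eq_swap] at s3
  by_cases cα : a < α ∧ α < b
  · exact Or.inl ⟨⟨cα.1.le, cα.2.le⟩, chord_in hnc hab hsab s1 cα.1 cα.2,
      chord_in hnc hab hsab s3 cα.1 cα.2⟩
  by_cases cβ : a < β ∧ β < b
  · exact Or.inl ⟨chord_in hnc hab hsab s1' cβ.1 cβ.2, ⟨cβ.1.le, cβ.2.le⟩,
      chord_in hnc hab hsab s2 cβ.1 cβ.2⟩
  by_cases cγ : a < γ ∧ γ < b
  · exact Or.inl ⟨chord_in hnc hab hsab s3' cγ.1 cγ.2,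
      chord_in hnc hab hsab s2' cγ.1 cγ.2, ⟨cγ.1.le, cγ.2.le⟩⟩
  · exact Or.inr ⟨cα, cβ, cγ⟩

lemma pin {a b v : Fin m} (h1 : a ≤ v) (h2 : v ≤ b) (h3 : ¬(a < v ∧ v < b)) :
    v = a ∨ v = b := by
  rcases eq_or_lt_of_le h1 with h | h
  · exact Or.inl h.symm
  rcases eq_or_lt_of_le h2 with h' | h'
  · exact Or.inr h'
  · exact absurd ⟨h, h'⟩ h3

lemma pair_eq {u w a b : Fin m} (hu : u = a ∨ u = b) (hw : w = a ∨ w = b) (huw : u ≠ w) :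
    s(u, w) = s(a, b) := by
  rcases hu with rfl | rfl <;> rcases hw with rfl | rfl
  · exact absurd rfl huw
  · rfl
  · exact Sym2.eq_swap
  · exact absurd rfl huw

include hnc in
lemma mem_side_inside {α β γ a b : Fin m} {p : Sym2 (Fin m)}
    (htri : IsTriangle T α β γ) (hab : a < b) (hsab : IsSide T s(a, b))
    (hp : p ∈ ({s(α, β), s(β, γ), s(α, γ)} : Set (Sym2 (Fin m)))) (hpn : p ≠ s(a, b)) :
    Inside a b p ↔ ((a ≤ α ∧ α ≤ b) ∧ (a ≤ β ∧ β ≤ b) ∧ (a ≤ γ ∧ γ ≤ b)) := by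
  obtain ⟨t1, t2, t3, -, -, -⟩ := id htri
  simp only [Set.mem_insert_iff, Set.mem_singleton_iff] at hp
  rcases sep hnc htri hab hsab with hin | hout
  · refine iff_of_true ?_ hin
    rcases hp with rfl | rfl | rfl <;> rw [inside_mk] <;> tauto
  · refine iff_of_false ?_ ?_
    · intro hins
      apply hpn
      rcases hp with rfl | rfl | rfl <;> rw [inside_mk] at hins
      · exact pair_eq (pin hins.1.1 hins.1.2 hout.1) (pin hins.2.1 hins.2.2 hout.2.1) t1
      · exact pair_eq (pin hins.1.1 hins.1.2 hout.2.1) (pin hins.2.1 hins.2.2 hout.2.2) t2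
      · exact pair_eq (pin hins.1.1 hins.1.2 hout.1) (pin hins.2.1 hins.2.2 hout.2.2) t3
    · rintro ⟨hα, hβ, hγ⟩
      rcases pin hα.1 hα.2 hout.1 with rfl | rfl
      · rcases pin hβ.1 hβ.2 hout.2.1 with rfl | rfl
        · exact t1 rfl
        · rcases pin hγ.1 hγ.2 hout.2.2 with rfl | rfl
          · exact t3 rfl
          · exact t2 rfl
      · rcases pin hβ.1 hβ.2 hout.2.1 with rfl | rfl
        · rcases pin hγ.1 hγ.2 hout.2.2 with rfl | rfl
          · exact t2 rfl
          · exact t3 rfl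
        · exact t1 rfl

include hnc in
lemma step {a b : Fin m} {d e : {p : Sym2 (Fin m) // p ∈ T}} (h : (QT T).Adj d e)
    (hab : a < b) (hsab : IsSide T s(a, b))
    (hd : (d : Sym2 (Fin m)) ≠ s(a, b)) (he : (e : Sym2 (Fin m)) ≠ s(a, b)) :
    Inside a b (d : Sym2 (Fin m)) ↔ Inside a b (e : Sym2 (Fin m)) := by
  rw [QT, SimpleGraph.fromRel_adj] at h
  obtain ⟨-, ⟨α, β, γ, htri, h1, h2⟩ | ⟨α, β, γ, htri, h1, h2⟩⟩ := h
  · exact (mem_side_inside hnc htri hab hsab h1 hd).trans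
      (mem_side_inside hnc htri hab hsab h2 he).symm
  · exact (mem_side_inside hnc htri hab hsab h2 hd).trans
      (mem_side_inside hnc htri hab hsab h1 he).symm

include hnc in
lemma inside_along {a b : Fin m} (hab : a < b) (hsab : IsSide T s(a, b)) :
    ∀ {x y : {p : Sym2 (Fin m) // p ∈ T}} (q : (QT T).Walk x y),
      (∀ z ∈ q.support, (z : Sym2 (Fin m)) ≠ s(a, b)) →
      (Inside a b (x : Sym2 (Fin m)) ↔ Inside a b (y : Sym2 (Fin m))) := by
  intro x y q
  induction q with
  | nil => exact fun _ => Iff.rfl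
  | cons h q ih =>
    intro hz
    refine (step hnc h hab hsab (hz _ (SimpleGraph.Walk.start_mem_support _)) (hz _ ?_)).trans
      (ih fun z hzz => hz z (by rw [SimpleGraph.Walk.support_cons]
                                exact List.mem_cons_of_mem _ hzz))
    rw [SimpleGraph.Walk.support_cons]
    exact List.mem_cons_of_mem _ (SimpleGraph.Walk.start_mem_support q)

lemma sset_swap12 (α β γ : Fin m) : SSet β α γ = SSet α β γ := by
  ext x
  simp only [SSet, Set.mem_insert_iff, Set.mem_singleton_iff]
  rw [show s(β, α) = s(α, β) from Sym2.eq_swap, show s(α, γ) = s(γ, α) from Sym2.eq_swap]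
  tauto

lemma sset_swap23 (α β γ : Fin m) : SSet α γ β = SSet α β γ := by
  ext x
  simp only [SSet, Set.mem_insert_iff, Set.mem_singleton_iff]
  rw [show s(γ, β) = s(β, γ) from Sym2.eq_swap]
  tauto

lemma tri_swap12 {α β γ : Fin m} (h : IsTriangle T α β γ) : IsTriangle T β α γ := by
  obtain ⟨t1, t2, t3, s1, s2, s3⟩ := h
  exact ⟨t1.symm, t3, t2, by rwa [Sym2.eq_swap], s3, s2⟩

lemma tri_swap23 {α β γ : Fin m} (h : IsTriangle T α β γ) : IsTriangle T α γ β := by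
  obtain ⟨t1, t2, t3, s1, s2, s3⟩ := h
  exact ⟨t3, t2.symm, t1, s3, by rwa [Sym2.eq_swap], s1⟩


lemma adj_tri_core {a b γ : Fin m} {d e : Sym2 (Fin m)}
    (hne : d ≠ e) (htri : IsTriangle T a b γ)
    (he1 : e ∈ SSet a b γ) (hd : d = s(a, b)) :
    ∃ c : Fin m, c ≠ a ∧ c ≠ b ∧ IsSide T s(a, c) ∧ IsSide T s(b, c) ∧
      (e = s(a, c) ∨ e = s(b, c)) := by
  obtain ⟨t1, t2, t3, s1, s2, s3⟩ := htri
  simp only [SSet, Set.mem_insert_iff, Set.mem_singleton_iff] at he1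
  refine ⟨γ, Ne.symm t3, Ne.symm t2, s3, s2, ?_⟩
  rcases he1 with rfl | rfl | rfl
  · exact absurd hd hne
  · exact Or.inr rfl
  · exact Or.inl rfl

lemma adj_tri {a b : Fin m} {d e : {p : Sym2 (Fin m) // p ∈ T}} (h : (QT T).Adj d e)
    (hd : (d : Sym2 (Fin m)) = s(a, b)) :
    ∃ c : Fin m, c ≠ a ∧ c ≠ b ∧ IsSide T s(a, c) ∧ IsSide T s(b, c) ∧
      ((e : Sym2 (Fin m)) = s(a, c) ∨ (e : Sym2 (Fin m)) = s(b, c)) := by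
  have hne : (d : Sym2 (Fin m)) ≠ (e : Sym2 (Fin m)) := fun hh => h.ne (Subtype.ext hh)
  rw [QT, SimpleGraph.fromRel_adj] at h
  have key : ∀ α β γ : Fin m, IsTriangle T α β γ →
      (d : Sym2 (Fin m)) ∈ SSet α β γ → (e : Sym2 (Fin m)) ∈ SSet α β γ →
      ∃ c : Fin m, c ≠ a ∧ c ≠ b ∧ IsSide T s(a, c) ∧ IsSide T s(b, c) ∧
        ((e : Sym2 (Fin m)) = s(a, c) ∨ (e : Sym2 (Fin m)) = s(b, c)) := by
    intro α β γ htri hd1 he1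
    simp only [SSet, Set.mem_insert_iff, Set.mem_singleton_iff] at hd1
    rcases hd1 with h1 | h1 | h1 <;> rw [hd, Sym2.eq_iff] at h1 <;>
      rcases h1 with ⟨rfl, rfl⟩ | ⟨rfl, rfl⟩
    · exact adj_tri_core hne htri he1 hd
    · exact adj_tri_core hne (tri_swap12 htri) (by rwa [sset_swap12]) hd
    · exact adj_tri_core hne (tri_swap23 (tri_swap12 htri))
        (by rwa [sset_swap23, sset_swap12]) hd
    · exact adj_tri_core hne (tri_swap23 (tri_swap12 (tri_swap23 htri)))
        (by rwa [sset_swap23, sset_swap12, sset_swap23]) hd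
    · exact adj_tri_core hne (tri_swap23 htri) (by rwa [sset_swap23]) hd
    · exact adj_tri_core hne (tri_swap12 (tri_swap23 htri))
        (by rwa [sset_swap12, sset_swap23]) hd
  rcases h.2 with ⟨α, β, γ, htri, h1, h2⟩ | ⟨α, β, γ, htri, h1, h2⟩
  · exact key α β γ htri h1 h2
  · exact key α β γ htri h2 h1

include hnc in
lemma aux_third {a b c1 c2 : Fin m} (hab : a < b)
    (hc1a : c1 ≠ a) (hc1b : c1 ≠ b) (hc2a : c2 ≠ a) (hc2b : c2 ≠ b)
    (s1 : IsSide T s(a, c1)) (s2 : IsSide T s(b, c1))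
    (s3 : IsSide T s(a, c2)) (s4 : IsSide T s(b, c2))
    (hiff : (a < c1 ∧ c1 < b) ↔ (a < c2 ∧ c2 < b)) (hlt : c1 < c2) : False := by
  have s2' : IsSide T s(c1, b) := by rwa [Sym2.eq_swap] at s2
  have s1' : IsSide T s(c1, a) := by rwa [Sym2.eq_swap] at s1
  have s4' : IsSide T s(c2, b) := by rwa [Sym2.eq_swap] at s4
  by_cases h1 : a < c1 ∧ c1 < b
  · have h2 := hiff.mp h1
    exact noCrossSides hnc s3 s2' (crossAux_mk h1.1 hlt h2.2)
  · have h2 : ¬ (a < c2 ∧ c2 < b) := fun hh => h1 (hiff.mpr hh)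
    have p1 : c1 < a ∨ b < c1 := by
      rcases lt_trichotomy c1 a with h | h | h
      · exact Or.inl h
      · exact absurd h hc1a
      · rcases lt_trichotomy c1 b with h' | h' | h'
        · exact absurd ⟨h, h'⟩ h1
        · exact absurd h' hc1b
        · exact Or.inr h'
    have p2 : c2 < a ∨ b < c2 := by
      rcases lt_trichotomy c2 a with h | h | h
      · exact Or.inl h
      · exact absurd h hc2a
      · rcases lt_trichotomy c2 b with h' | h' | h'
        · exact absurd ⟨h, h'⟩ h2
        · exact absurd h' hc2b
        · exact Or.inr h'
    rcases p1 with p1 | p1 <;> rcases p2 with p2 | p2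
    · exact noCrossSides hnc s1' s4' (crossAux_mk hlt p2 hab)
    · exact noCrossSides hnc s2' s3 (crossAux_mk p1 hab p2)
    · exact absurd (hlt.trans (p2.trans hab)) (lt_asymm p1)
    · exact noCrossSides hnc s1 s4 (crossAux_mk hab p1 hlt)

include hnc in
lemma third_unique {a b c1 c2 : Fin m} (hab : a < b)
    (hc1a : c1 ≠ a) (hc1b : c1 ≠ b) (hc2a : c2 ≠ a) (hc2b : c2 ≠ b)
    (s1 : IsSide T s(a, c1)) (s2 : IsSide T s(b, c1))
    (s3 : IsSide T s(a, c2)) (s4 : IsSide T s(b, c2))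
    (hiff : (a < c1 ∧ c1 < b) ↔ (a < c2 ∧ c2 < b)) : c1 = c2 := by
  by_contra hne
  rcases Ne.lt_or_gt hne with h | h
  · exact aux_third hnc hab hc1a hc1b hc2a hc2b s1 s2 s3 s4 hiff h
  · exact aux_third hnc hab hc2a hc2b hc1a hc1b s3 s4 s1 s2 hiff.symm h

lemma uniq2 {t1 t2 t3 t1' t2' t3' : Fin m} {d e : Sym2 (Fin m)}
    (h12 : t1 < t2) (h23 : t2 < t3) (h12' : t1' < t2') (h23' : t2' < t3')
    (hde : d ≠ e) (hd : d ∈ Stmt10.SSet t1 t2 t3) (he : e ∈ Stmt10.SSet t1 t2 t3)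
    (hd' : d ∈ SSet t1' t2' t3') (he' : e ∈ SSet t1' t2' t3') :
    t1 = t1' ∧ t2 = t2' ∧ t3 = t3' := by
  simp only [SSet, Set.mem_insert_iff, Set.mem_singleton_iff] at hd he hd' he'
  rcases hd with rfl | rfl | rfl <;> rcases he with rfl | rfl | rfl <;>
    simp only [Sym2.eq_iff, Fin.ext_iff, Fin.lt_def, ne_eq, not_or, not_and] at hd' he' hde h12 h23 h12' h23' ⊢ <;>
    first
      | exact absurd trivial hde
      | omega


include hnc in
lemma cycle_ends (hdiag : ∀ p ∈ T, IsDiagonal p) {v x y : {p : Sym2 (Fin m) // p ∈ T}}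
    (h₁ : (QT T).Adj v x) (q : (QT T).Walk x y) (h₂ : (QT T).Adj y v)
    (hw : (SimpleGraph.Walk.cons h₁ (q.concat h₂)).IsCycle) :
    ∃ t1 t2 t3 : Fin m, t1 < t2 ∧ t2 < t3 ∧
      ({(v : Sym2 (Fin m)), (x : Sym2 (Fin m)), (y : Sym2 (Fin m))} :
        Set (Sym2 (Fin m))) = SSet t1 t2 t3 := by
  classical
  -- extract the endpoints of v, sorted
  obtain ⟨a0, b0, hv0⟩ : ∃ a b, (v : Sym2 (Fin m)) = s(a, b) :=
    Sym2.exists.mp ⟨(v : Sym2 (Fin m)), rfl⟩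
  have hvndiag : a0 ≠ b0 := by
    intro h
    exact (hdiag _ v.2).1 (by rw [hv0, h]; exact Sym2.mk_isDiag_iff.mpr rfl)
  obtain ⟨a, b, hab, hv⟩ : ∃ a b : Fin m, a < b ∧ (v : Sym2 (Fin m)) = s(a, b) := by
    rcases Ne.lt_or_gt hvndiag with h | h
    · exact ⟨a0, b0, h, hv0⟩
    · exact ⟨b0, a0, h, hv0.trans Sym2.eq_swap⟩
  have hsab : IsSide T s(a, b) := Or.inl (hv ▸ v.2)
  -- the triangles at the two ends
  obtain ⟨c1, hc1a, hc1b, sc1, sc1', hx⟩ := adj_tri h₁ hv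
  obtain ⟨c2, hc2a, hc2b, sc2, sc2', hy⟩ := adj_tri h₂.symm hv
  -- nodup facts
  have hnodup : ((q.concat h₂).support).Nodup := by
    have := hw.support_nodup
    rwa [SimpleGraph.Walk.support_cons, List.tail_cons] at this
  have hsup : ((q.concat h₂).support) = q.support ++ [v] := by
    rw [SimpleGraph.Walk.support_concat]
  have hvq : v ∉ q.support := by
    rw [hsup] at hnodup
    have := List.disjoint_of_nodup_append hnodup
    exact fun hmem => this hmem (List.mem_singleton_self v)
  -- x and y are distinct
  have hxyne : (x : Sym2 (Fin m)) ≠ (y : Sym2 (Fin m)) := by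
    intro hxy
    have hxy' : x = y := Subtype.ext hxy
    have hE := hw.isCircuit.isTrail.edges_nodup
    rw [SimpleGraph.Walk.edges_cons, SimpleGraph.Walk.edges_concat,
      List.concat_eq_append] at hE
    have h1 := (List.nodup_cons.mp hE).1
    apply h1
    apply List.mem_append_right
    have : s(v, x) = s(y, v) := by rw [hxy']; exact Sym2.eq_swap
    rw [this]
    exact List.mem_singleton_self _
  -- inside propagation
  have hiff0 : Inside a b (x : Sym2 (Fin m)) ↔ Inside a b (y : Sym2 (Fin m)) := by
    refine inside_along hnc hab hsab q fun z hz heq => hvq ?_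
    have : z = v := Subtype.ext (heq.trans hv.symm)
    exact this ▸ hz
  have key : ∀ (c : Fin m) (z : {p : Sym2 (Fin m) // p ∈ T}), c ≠ a → c ≠ b →
      ((z : Sym2 (Fin m)) = s(a, c) ∨ (z : Sym2 (Fin m)) = s(b, c)) →
      (Inside a b (z : Sym2 (Fin m)) ↔ (a < c ∧ c < b)) := by
    intro c z hca hcb hz
    rcases hz with hz | hz <;> rw [hz, inside_mk] <;>
      constructor
    · intro h
      exact ⟨lt_of_le_of_ne h.2.1 (Ne.symm hca), lt_of_le_of_ne h.2.2 hcb⟩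
    · intro h
      exact ⟨⟨le_refl a, hab.le⟩, ⟨h.1.le, h.2.le⟩⟩
    · intro h
      exact ⟨lt_of_le_of_ne h.2.1 (Ne.symm hca), lt_of_le_of_ne h.2.2 hcb⟩
    · intro h
      exact ⟨⟨hab.le, le_refl b⟩, ⟨h.1.le, h.2.le⟩⟩
  have hiff2 : (a < c1 ∧ c1 < b) ↔ (a < c2 ∧ c2 < b) :=
    (key c1 x hc1a hc1b hx).symm.trans (hiff0.trans (key c2 y hc2a hc2b hy))
  have hc12 : c1 = c2 :=
    third_unique hnc hab hc1a hc1b hc2a hc2b sc1 sc1' sc2 sc2' hiff2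
  subst hc12
  -- the three sides
  have hset : ({(v : Sym2 (Fin m)), (x : Sym2 (Fin m)), (y : Sym2 (Fin m))} :
      Set (Sym2 (Fin m))) = {s(a, b), s(a, c1), s(b, c1)} := by
    rcases hx with hx | hx <;> rcases hy with hy | hy
    · exact absurd (hx.trans hy.symm) hxyne
    · rw [hv, hx, hy]
    · rw [hv, hx, hy, Set.pair_comm s(b, c1) s(a, c1)]
    · exact absurd (hx.trans hy.symm) hxyne
  rw [hset]
  have hpos : c1 < a ∨ (a < c1 ∧ c1 < b) ∨ b < c1 := by
    rcases lt_trichotomy c1 a with h | h | h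
    · exact Or.inl h
    · exact absurd h hc1a
    rcases lt_trichotomy c1 b with h' | h' | h'
    · exact Or.inr (Or.inl ⟨h, h'⟩)
    · exact absurd h' hc1b
    · exact Or.inr (Or.inr h')
  rcases hpos with hpos | ⟨hpos1, hpos2⟩ | hpos
  · refine ⟨c1, a, b, hpos, hab, ?_⟩
    show _ = ({s(c1, a), s(a, b), s(c1, b)} : Set (Sym2 (Fin m)))
    rw [show s(c1, a) = s(a, c1) from Sym2.eq_swap,
      show s(c1, b) = s(b, c1) from Sym2.eq_swap]
    exact Set.insert_comm _ _ _
  · refine ⟨a, c1, b, hpos1, hpos2, ?_⟩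
    show _ = ({s(a, c1), s(c1, b), s(a, b)} : Set (Sym2 (Fin m)))
    rw [show s(c1, b) = s(b, c1) from Sym2.eq_swap, Set.insert_comm,
      Set.pair_comm s(a, b) s(b, c1)]
  · refine ⟨a, b, c1, hab, hpos, ?_⟩
    show _ = ({s(a, b), s(b, c1), s(a, c1)} : Set (Sym2 (Fin m)))
    rw [Set.pair_comm s(a, c1) s(b, c1)]

end Stmt10

open Stmt10 SimpleGraph.Walk

/-- For a triangulation `T` of a regular `(n+3)`-gon by `n`
pairwise non-crossing diagonals, the only cycles in the underlying unoriented
graph of the quiver `Q_T` are 3-cycles arising from internal triangles of `T`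
(triangles all three of whose sides are diagonals of `T`). -/
theorem stmt10 (n : ℕ) (T : Finset (Sym2 (Fin (n + 3))))
    (hdiag : ∀ p ∈ T, IsDiagonal p)
    (hnc : ∀ p ∈ T, ∀ q ∈ T, ¬ Crosses p q)
    (hcard : T.card = n)
    {v : {p : Sym2 (Fin (n + 3)) // p ∈ T}} (w : (QT T).Walk v v)
    (hw : w.IsCycle) :
    w.length = 3 ∧ ∃ a b c : Fin (n + 3),
      s(a, b) ∈ T ∧ s(b, c) ∈ T ∧ s(a, c) ∈ T ∧
      ∀ x ∈ w.support, (x : Sym2 (Fin (n + 3))) = s(a, b) ∨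
        (x : Sym2 (Fin (n + 3))) = s(b, c) ∨ (x : Sym2 (Fin (n + 3))) = s(a, c) := by
  classical
  have h3 := hw.three_le_length
  cases w with
  | nil => simp at h3
  | cons h₁ p =>
    rename_i x
    cases p with
    | nil => simp at h3
    | cons hp p' =>
      rename_i x'
      obtain ⟨y, q, h₂, hq⟩ := exists_cons_eq_concat hp p'
      rw [hq] at hw h3 ⊢
      obtain ⟨t1, t2, t3, h12, h23, hset⟩ := cycle_ends hnc hdiag h₁ q h₂ hw
      cases q with
      | nil => simp [SimpleGraph.Walk.length_concat] at h3
      | cons h₃ q'' =>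
        rename_i x''
        -- the rotated cycle based at x
        have hw2 : (cons h₃ ((q''.concat h₂).concat h₁)).IsCycle := by
          refine ⟨⟨⟨?_⟩, by simp⟩, ?_⟩
          · have hE := hw.isCircuit.isTrail.edges_nodup
            refine List.Perm.nodup ?_ hE
            simp only [edges_cons, edges_concat, List.concat_eq_append,
              ← List.append_assoc, ← List.cons_append]
            exact (List.perm_append_singleton _ _).symm
          · have hS := hw.support_nodup
            simp only [support_cons, support_concat, List.concat_eq_append,
              List.tail_cons, List.nodup_append, List.nodup_cons, List.mem_append,
              List.mem_cons, List.mem_singleton, List.nodup_nil, List.disjoint_singleton,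
              List.not_mem_nil, List.cons_append, List.nil_append] at hS ⊢
            grind
        obtain ⟨t1', t2', t3', h12', h23', hset'⟩ :=
          cycle_ends hnc hdiag h₃ (q''.concat h₂) h₁ hw2
        have hvx : (v : Sym2 (Fin (n+3))) ≠ (x : Sym2 (Fin (n+3))) :=
          fun h => h₁.ne (Subtype.ext h)
        have hteq : t1 = t1' ∧ t2 = t2' ∧ t3 = t3' := by
          refine uniq2 h12 h23 h12' h23' hvx ?_ ?_ ?_ ?_
          · rw [← hset]; exact Set.mem_insert _ _
          · rw [← hset]; exact Set.mem_insert_iff.mpr (Or.inr (Set.mem_insert _ _))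
          · rw [← hset']
            exact Set.mem_insert_iff.mpr (Or.inr (Set.mem_insert_iff.mpr
              (Or.inr (Set.mem_singleton _))))
          · rw [← hset']; exact Set.mem_insert _ _
        obtain ⟨rfl, rfl, rfl⟩ := hteq
        -- identify x'' with y
        have hvq : v ∉ (cons h₃ q'').support := by
          have hS := hw.support_nodup
          simp only [support_cons, support_concat, List.concat_eq_append,
            List.tail_cons] at hS
          intro hmem
          exact (List.disjoint_of_nodup_append hS) hmem (List.mem_singleton_self v)
        have hx''v : (x'' : Sym2 (Fin (n+3))) ≠ (v : Sym2 (Fin (n+3))) := by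
          intro h
          apply hvq
          rw [support_cons]
          exact List.mem_cons_of_mem _
            ((Subtype.ext h : x'' = v) ▸ q''.start_mem_support)
        have hx''x : (x'' : Sym2 (Fin (n+3))) ≠ (x : Sym2 (Fin (n+3))) :=
          fun h => h₃.ne (Subtype.ext h.symm)
        have hx''mem : (x'' : Sym2 (Fin (n+3))) ∈
            ({(v : Sym2 (Fin (n+3))), (x : Sym2 (Fin (n+3))), (y : Sym2 (Fin (n+3)))} :
              Set (Sym2 (Fin (n+3)))) := by
          rw [hset, ← hset']
          exact Set.mem_insert_iff.mpr (Or.inr (Set.mem_insert _ _))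
        have hx''y : x'' = y := by
          simp only [Set.mem_insert_iff, Set.mem_singleton_iff] at hx''mem
          rcases hx''mem with h | h | h
          · exact absurd h hx''v
          · exact absurd h hx''x
          · exact Subtype.ext h
        subst hx''y
        -- q'' must be trivial
        cases q'' with
        | cons h₄ r =>
          exfalso
          have hS := hw.support_nodup
          have hyr : x'' ∈ r.support := r.end_mem_support
          simp only [support_cons, support_concat, List.concat_eq_append,
            List.tail_cons, List.nodup_cons, List.nodup_append, List.mem_append,
            List.mem_cons, List.mem_singleton, not_or] at hS
          tauto
        | nil =>
          constructor
          · simp [SimpleGraph.Walk.length_concat]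
          · refine ⟨t1, t2, t3, ?_, ?_, ?_, ?_⟩
            · have : s(t1, t2) ∈ Stmt10.SSet t1 t2 t3 := Set.mem_insert _ _
              rw [← hset] at this
              simp only [Set.mem_insert_iff, Set.mem_singleton_iff] at this
              rcases this with h | h | h <;> rw [h] <;> [exact v.2; exact x.2; exact x''.2]
            · have : s(t2, t3) ∈ Stmt10.SSet t1 t2 t3 :=
                Set.mem_insert_iff.mpr (Or.inr (Set.mem_insert _ _))
              rw [← hset] at this
              simp only [Set.mem_insert_iff, Set.mem_singleton_iff] at this
              rcases this with h | h | h <;> rw [h] <;> [exact v.2; exact x.2; exact x''.2]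
            · have : s(t1, t3) ∈ Stmt10.SSet t1 t2 t3 :=
                Set.mem_insert_iff.mpr (Or.inr (Set.mem_insert_iff.mpr
                  (Or.inr (Set.mem_singleton _))))
              rw [← hset] at this
              simp only [Set.mem_insert_iff, Set.mem_singleton_iff] at this
              rcases this with h | h | h <;> rw [h] <;> [exact v.2; exact x.2; exact x''.2]
            · intro z hz
              have hz3 : z = v ∨ z = x ∨ z = x'' := by
                simp only [support_cons, support_concat, List.concat_eq_append,
                  support_nil, List.mem_cons, List.mem_append, List.mem_singleton,
                  List.cons_append, List.nil_append, List.not_mem_nil] at hz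
                tauto
              have hz' : (z : Sym2 (Fin (n+3))) ∈ Stmt10.SSet t1 t2 t3 := by
                rw [← hset]
                simp only [Set.mem_insert_iff, Set.mem_singleton_iff]
                rcases hz3 with rfl | rfl | rfl
                · exact Or.inl rfl
                · exact Or.inr (Or.inl rfl)
                · exact Or.inr (Or.inr rfl)
              simpa only [Stmt10.SSet, Set.mem_insert_iff, Set.mem_singleton_iff] using hz'
end

section
/- Let B be a skew-symmetric integer matrix with entries in {0, ±1}, let Γ = Γ(B) be its quiver, and let A = (a_{xy}) with a_{xy} = (γ_x, γ_y) be the Gram matrix of a companion basis {γ_x} for Γ. Fix a vertex k, and define γ'_x = s_{γ_k}(γ_x) if there is an arrow x → k in Γ, and γ'_x = γ_x otherwise. Then {γ'_x} is a Z-basis of the root lattice ZΦ. -/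
open scoped RealInnerProductSpace

/-- Inward companion basis mutation at a vertex `k` produces a
`ℤ`-basis of the root lattice.  Here `B` is a skew-symmetric matrix with entries
in `{0, ±1}` (its quiver `Γ` has an arrow `x → k` iff `B x k = 1`), `γ` is a
companion basis for `Γ` (a `ℤ`-basis of roots of the root lattice `ℤΦ` with
`|(γ_x, γ_y)| = |b_{xy}|`), and `γ'_x = s_{γ_k}(γ_x)` if there is an arrow
`x → k`, `γ'_x = γ_x` otherwise. -/
theorem stmt11 {V : Type*} [NormedAddCommGroup V] [InnerProductSpace ℝ V]
    {X : Type*} [Fintype X] [DecidableEq X]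
    (Φ : Set V)
    (hlen : ∀ α ∈ Φ, ⟪α, α⟫ = 2)
    (B : Matrix X X ℤ)
    (hskew : ∀ x y, B y x = - B x y)
    (hent : ∀ x y, B x y = 0 ∨ B x y = 1 ∨ B x y = -1)
    (γ : X → V) (hγΦ : ∀ x, γ x ∈ Φ)
    (hli : LinearIndependent ℤ γ)
    (hspan : ∀ α ∈ Φ, ∃ c : X → ℤ, α = ∑ x, (c x : ℝ) • γ x)
    (hcomp : ∀ x y, x ≠ y → |⟪γ x, γ y⟫| = |(B x y : ℝ)|)
    (k : X) (γ' : X → V)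
    (hγ' : ∀ x, γ' x = if B x k = 1 then γ x - ⟪γ x, γ k⟫ • γ k else γ x) :
    (∀ x, γ' x ∈ Submodule.span ℤ Φ) ∧
    LinearIndependent ℤ γ' ∧
    (∀ α ∈ Φ, ∃ c : X → ℤ, α = ∑ x, (c x : ℝ) • γ' x) := by
  classical
  have hBkk : B k k = 0 := by have := hskew k k; omega
  obtain ⟨e, he, he0⟩ : ∃ e : X → ℤ, (∀ x, B x k = 1 → (e x : ℝ) = ⟪γ x, γ k⟫) ∧
      (∀ x, B x k ≠ 1 → e x = 0) := by
    refine ⟨fun x => if h : B x k = 1 then (if ⟪γ x, γ k⟫ = (1:ℝ) then 1 else -1) else 0,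
      fun x hx => ?_, fun x hx => ?_⟩
    · have hxk : x ≠ k := by rintro rfl; rw [hBkk] at hx; exact one_ne_zero hx.symm
      have h1 : |⟪γ x, γ k⟫| = 1 := by
        have := hcomp x k hxk; rw [hx] at this; simpa using this
      rcases (abs_eq (by norm_num : (0:ℝ) ≤ 1)).mp h1 with h | h
      · simp [hx, h]
      · simp [hx, h]; norm_num [h]
    · simp [hx]
  have hek : e k = 0 := he0 k (by rw [hBkk]; norm_num)
  have hkey : ∀ x, γ' x = γ x - (e x : ℝ) • γ k := by
    intro x
    by_cases hx : B x k = 1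
    · rw [hγ' x, if_pos hx, he x hx]
    · rw [hγ' x, if_neg hx, he0 x hx]; simp
  -- sum identity
  have hA : ∀ c : X → ℤ, ∑ x, (c x : ℝ) • γ' x
      = (∑ x, (c x : ℝ) • γ x) - ((∑ x, c x * e x : ℤ) : ℝ) • γ k := by
    intro c
    simp only [hkey, smul_sub, smul_smul, Finset.sum_sub_distrib, ← Finset.sum_smul]
    push_cast
    ring_nf
  refine ⟨?_, ?_, ?_⟩
  · intro x
    have h1 : ((e x : ℝ)) • γ k = (e x) • γ k := Int.cast_smul_eq_zsmul ℝ _ _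
    rw [hkey x, h1]
    exact sub_mem (Submodule.subset_span (hγΦ x))
      (Submodule.smul_mem _ _ (Submodule.subset_span (hγΦ k)))
  · rw [Fintype.linearIndependent_iff]
    intro g hg
    have hg' : ∑ x, (g x : ℝ) • γ' x = 0 := by
      rw [← hg]; exact Finset.sum_congr rfl fun x _ => (Int.cast_smul_eq_zsmul ℝ (g x) (γ' x))
    rw [hA] at hg'
    set d : X → ℤ := fun x => g x - (if x = k then ∑ y, g y * e y else 0) with hd_def
    have hstep : ∀ x, (d x : ℝ) • γ x
        = (g x : ℝ) • γ x - (if x = k then ((∑ y, g y * e y : ℤ) : ℝ) • γ x else 0) := by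
      intro x; by_cases hx : x = k <;> simp [hd_def, hx, sub_smul]
    have hdR : ∑ x, (d x : ℝ) • γ x = 0 := by
      rw [Finset.sum_congr rfl fun x _ => hstep x, Finset.sum_sub_distrib,
        Finset.sum_ite_eq' Finset.univ k]
      simpa using hg'
    have hdsum : ∑ x, d x • γ x = 0 := by
      rw [← hdR]
      exact (Finset.sum_congr rfl fun x _ => (Int.cast_smul_eq_zsmul ℝ (d x) (γ x))).symm
    have hd0 := Fintype.linearIndependent_iff.mp hli d hdsum
    have hne : ∀ x, x ≠ k → g x = 0 := by
      intro x hx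
      have := hd0 x
      simpa [hd_def, hx] using this
    intro i
    by_cases hik : i = k
    · have hsum0 : ∑ y, g y * e y = 0 := by
        rw [Finset.sum_eq_single k]
        · rw [hek]; ring
        · intro y _ hy; rw [hne y hy]; ring
        · simp
      have := hd0 k
      rw [hik]
      simpa [hd_def, hsum0] using this
    · exact hne i hik
  · intro α hα
    obtain ⟨c, hc⟩ := hspan α hα
    set S : ℤ := ∑ y, c y * e y with hS_def
    refine ⟨fun x => c x + (if x = k then S else 0), ?_⟩
    rw [hA, hc]
    have h2 : ∑ x, (c x + if x = k then S else 0) * e x = S := by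
      simp only [add_mul, ite_mul, zero_mul, Finset.sum_add_distrib,
        Finset.sum_ite_eq', Finset.mem_univ, if_true, hek, mul_zero, add_zero, hS_def]
    rw [h2]
    have h3 : ∀ x, ((c x + if x = k then S else 0 : ℤ) : ℝ) • γ x
        = (c x : ℝ) • γ x + (if x = k then ((S : ℤ) : ℝ) • γ x else 0) := by
      intro x; by_cases hx : x = k <;> simp [hx, add_smul]
    rw [Finset.sum_congr rfl fun x _ => h3 x, Finset.sum_add_distrib,
      Finset.sum_ite_eq' Finset.univ k]
    simp
end

section
/- Companion basis mutation (inward at a vertex k) of a companion basis for the quiver Γ of a cluster-tilted algebra of simply-laced Dynkin type yields a companion basis for the mutated quiver Γ' = μ_k(Γ). That is, if {γ_x} is a companion basis for Γ and γ'_x = s_{γ_k}(γ_x) when there is an arrow x → k and γ'_x = γ_x otherwise, then {γ'_x} is a Z-basis of ZΦ whose Gram matrix is a quasi-Cartan companion of the mutated exchange matrix B' = μ_k(B). -/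
open scoped RealInnerProductSpace

private lemma stmt12_inj3 {X : Type*} {p q r : X} (h1 : p ≠ q) (h2 : q ≠ r) (h3 : p ≠ r) :
    Function.Injective ![p, q, r] := by
  intro i j hij
  fin_cases i <;> fin_cases j <;> simp_all

private lemma stmt12_fin3 : ∀ i j : Fin (0 + 3), j ≠ i + 1 → i ≠ j + 1 → i ≠ j → False := by
  decide

private lemma stmt12_tri {V : Type*} [NormedAddCommGroup V] [InnerProductSpace ℝ V]
    {X : Type*} (B : Matrix X X ℤ) (γ : X → V)
    (hcyc : ∀ (m : ℕ) (v : Fin (m + 3) → X), Function.Injective v →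
      (∀ i, B (v i) (v (i + 1)) ≠ 0) →
      (∀ i j : Fin (m + 3), j ≠ i + 1 → i ≠ j + 1 → i ≠ j → B (v i) (v j) = 0) →
      (∀ i, B (v i) (v (i + 1)) = 1) ∨ (∀ i, B (v i) (v (i + 1)) = -1))
    (hA : ∀ (m : ℕ) (v : Fin (m + 3) → X), Function.Injective v →
      (∀ i, B (v i) (v (i + 1)) = 1) →
      (∀ i j : Fin (m + 3), j ≠ i + 1 → i ≠ j + 1 → i ≠ j → B (v i) (v j) = 0) →
      (∏ i, (-⟪γ (v i), γ (v (i + 1))⟫)) < 0)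
    (p q r : X) (h1 : p ≠ q) (h2 : q ≠ r) (h3 : p ≠ r)
    (hpq : B p q = 1) (hqr : B q r = 1) :
    (B r p = 1 → (-⟪γ p, γ q⟫) * (-⟪γ q, γ r⟫) * (-⟪γ r, γ p⟫) < 0) ∧
    B r p ≠ -1 := by
  have hinj : Function.Injective ![p, q, r] := stmt12_inj3 h1 h2 h3
  have hch : ∀ i j : Fin (0 + 3), j ≠ i + 1 → i ≠ j + 1 → i ≠ j →
      B (![p, q, r] i) (![p, q, r] j) = 0 := by
    intro i j a b c
    exact (stmt12_fin3 i j a b c).elim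
  have hv0 : (![p, q, r] : Fin (0+3) → X) 0 = p := rfl
  have hv1 : (![p, q, r] : Fin (0+3) → X) 1 = q := rfl
  have hv2 : (![p, q, r] : Fin (0+3) → X) 2 = r := rfl
  have ha0 : ((0 : Fin (0+3)) + 1) = 1 := rfl
  have ha1 : ((1 : Fin (0+3)) + 1) = 2 := rfl
  have ha2 : ((2 : Fin (0+3)) + 1) = 0 := rfl
  constructor
  · intro hrp
    have hedges : ∀ i : Fin (0+3), B (![p,q,r] i) (![p,q,r] (i + 1)) = 1 := by
      intro i
      fin_cases i
      · exact hpq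
      · exact hqr
      · exact hrp
    have := hA 0 ![p, q, r] hinj hedges hch
    rw [Fin.prod_univ_three, ha0, ha1, ha2, hv0, hv1, hv2] at this
    exact this
  · intro hrp
    have hedges : ∀ i : Fin (0+3), B (![p,q,r] i) (![p,q,r] (i + 1)) ≠ 0 := by
      intro i
      fin_cases i
      · show B p q ≠ 0; rw [hpq]; norm_num
      · show B q r ≠ 0; rw [hqr]; norm_num
      · show B r p ≠ 0; rw [hrp]; norm_num
    rcases hcyc 0 ![p, q, r] hinj hedges hch with h | h
    · have := h 2
      rw [ha2, hv2, hv0, hrp] at this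
      omega
    · have := h 0
      rw [ha0, hv0, hv1, hpq] at this
      omega

/-- Inward companion basis mutation.  `Φ` is a simply-laced root
system (roots of squared length 2, closed under reflections), `B` a
skew-symmetric exchange matrix of the corresponding finite-type cluster algebra
with entries in `{0, ±1}` (so every chordless cycle of its quiver `Γ` is
cyclically oriented, and the companion-basis Gram matrix satisfies the sign
condition `(▲)` on chordless cycles), and `γ` a companion basis for `Γ`.  Then
`γ'`, given by `γ'_x = s_{γ_k}(γ_x)` when there is an arrow `x → k` and
`γ'_x = γ_x` otherwise, is a companion basis for the mutated quiver
`Γ' = μ_k(Γ)`: it is a `ℤ`-basis of `ℤΦ` consisting of roots whose Gram matrix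
is a quasi-Cartan companion of `B' = μ_k(B)`. -/
theorem stmt12 {V : Type*} [NormedAddCommGroup V] [InnerProductSpace ℝ V]
    {X : Type*} [Fintype X] [DecidableEq X]
    (Φ : Set V)
    (hlen : ∀ α ∈ Φ, ⟪α, α⟫ = 2)
    (hrefl : ∀ α ∈ Φ, ∀ β ∈ Φ, β - ⟪β, α⟫ • α ∈ Φ)
    (B : Matrix X X ℤ)
    (hskew : ∀ x y, B y x = - B x y)
    (hent : ∀ x y, B x y = 0 ∨ B x y = 1 ∨ B x y = -1)
    (γ : X → V) (hγΦ : ∀ x, γ x ∈ Φ)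
    (hli : LinearIndependent ℤ γ)
    (hspan : ∀ α ∈ Φ, ∃ c : X → ℤ, α = ∑ x, (c x : ℝ) • γ x)
    (hcomp : ∀ x y, x ≠ y → |⟪γ x, γ y⟫| = |(B x y : ℝ)|)
    -- every chordless cycle of the quiver of `B` is cyclically oriented:
    (hcyc : ∀ (m : ℕ) (v : Fin (m + 3) → X), Function.Injective v →
      (∀ i, B (v i) (v (i + 1)) ≠ 0) →
      (∀ i j : Fin (m + 3), j ≠ i + 1 → i ≠ j + 1 → i ≠ j → B (v i) (v j) = 0) →
      (∀ i, B (v i) (v (i + 1)) = 1) ∨ (∀ i, B (v i) (v (i + 1)) = -1))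
    -- the Gram matrix of `γ` satisfies `∏_{i→j in Z} (-(γ_i, γ_j)) < 0` on
    -- every chordless cycle `Z`:
    (hA : ∀ (m : ℕ) (v : Fin (m + 3) → X), Function.Injective v →
      (∀ i, B (v i) (v (i + 1)) = 1) →
      (∀ i j : Fin (m + 3), j ≠ i + 1 → i ≠ j + 1 → i ≠ j → B (v i) (v j) = 0) →
      (∏ i, (-⟪γ (v i), γ (v (i + 1))⟫)) < 0)
    (k : X) (γ' : X → V)
    (hγ' : ∀ x, γ' x = if B x k = 1 then γ x - ⟪γ x, γ k⟫ • γ k else γ x)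
    (B' : Matrix X X ℤ)
    (hB' : ∀ x y, B' x y = if x = k ∨ y = k then - B x y
      else B x y + (|B x k| * B k y + B x k * |B k y|) / 2) :
    (∀ x, γ' x ∈ Φ) ∧
    LinearIndependent ℤ γ' ∧
    (∀ α ∈ Φ, ∃ c : X → ℤ, α = ∑ x, (c x : ℝ) • γ' x) ∧
    (∀ x, ⟪γ' x, γ' x⟫ = 2) ∧
    (∀ x y, x ≠ y → |⟪γ' x, γ' y⟫| = |(B' x y : ℝ)|) := by
  have hB0 : ∀ x, B x x = 0 := fun x => by have := hskew x x; omega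
  have hkne : ∀ x, B x k = 1 → x ≠ k := by
    intro x h hx; subst hx; rw [hB0] at h; exact one_ne_zero h.symm
  have hval : ∀ x, x ≠ k → ⟪γ x, γ k⟫ = (B x k : ℝ) ∨ ⟪γ x, γ k⟫ = -(B x k : ℝ) :=
    fun x hx => abs_eq_abs.mp (hcomp x k hx)
  -- membership
  have hmem : ∀ x, γ' x ∈ Φ := by
    intro x
    rw [hγ' x]
    split
    · exact hrefl (γ k) (hγΦ k) (γ x) (hγΦ x)
    · exact hγΦ x
  -- γ' x = γ x + n x • γ k with n k = 0
  have hn : ∀ x, ∃ m : ℤ, γ' x = γ x + (m : ℝ) • γ k ∧ (x = k → m = 0) := by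
    intro x
    by_cases h : B x k = 1
    · have hx := hkne x h
      rcases hval x hx with ha | ha
      · refine ⟨-1, ?_, fun hk => absurd hk hx⟩
        rw [hγ' x, if_pos h, ha, h]; push_cast; module
      · refine ⟨1, ?_, fun hk => absurd hk hx⟩
        rw [hγ' x, if_pos h, ha, h]; push_cast; module
    · exact ⟨0, by rw [hγ' x, if_neg h]; simp, fun _ => rfl⟩
  choose n hn1 hnk using hn
  have hnk0 : n k = 0 := hnk k rfl
  -- key sum relation
  have sumrel : ∀ c : X → ℤ, ∑ x, (c x : ℝ) • γ' x
      = ∑ x, ((c x + if x = k then (∑ y, c y * n y) else 0 : ℤ) : ℝ) • γ x := by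
    intro c
    have h1 : ∀ x ∈ Finset.univ, (c x : ℝ) • γ' x
        = (c x : ℝ) • γ x + ((c x * n x : ℤ) : ℝ) • γ k := by
      intro x _
      rw [hn1 x, smul_add, smul_smul]; push_cast; ring_nf
    rw [Finset.sum_congr rfl h1, Finset.sum_add_distrib]
    have h2 : ∑ x, ((c x * n x : ℤ) : ℝ) • γ k
        = ((∑ y, c y * n y : ℤ) : ℝ) • γ k := by
      rw [← Finset.sum_smul]; push_cast; ring_nf
    rw [h2]
    have h3 : ∀ x ∈ Finset.univ,
        ((c x + if x = k then (∑ y, c y * n y) else 0 : ℤ) : ℝ) • γ x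
        = (c x : ℝ) • γ x + (if x = k then ((∑ y, c y * n y : ℤ) : ℝ) • γ x else 0) := by
      intro x _
      split <;> push_cast <;> simp [add_smul]
    rw [Finset.sum_congr rfl h3, Finset.sum_add_distrib,
      Finset.sum_ite_eq' Finset.univ k]
    simp
  -- linear independence
  have hli' : LinearIndependent ℤ γ' := by
    rw [Fintype.linearIndependent_iff]
    intro c hc
    have hc' : ∑ x, (c x : ℝ) • γ' x = 0 := by
      rw [← hc]
      exact Finset.sum_congr rfl fun x _ => (Int.cast_smul_eq_zsmul ℝ (c x) (γ' x))
    rw [sumrel c] at hc'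
    have hz : ∀ x, (c x + if x = k then (∑ y, c y * n y) else 0) = 0 := by
      apply Fintype.linearIndependent_iff.mp hli
      rw [← hc']
      exact (Finset.sum_congr rfl fun x _ =>
        (Int.cast_smul_eq_zsmul ℝ _ (γ x))).symm
    have hck : ∀ x, x ≠ k → c x = 0 := by
      intro x hx; have := hz x; rw [if_neg hx] at this; omega
    intro x
    by_cases hx : x = k
    · rw [hx]
      have := hz k
      rw [if_pos rfl] at this
      have hs : (∑ y, c y * n y) = 0 := by
        rw [Finset.sum_eq_zero]
        intro y _
        by_cases hy : y = k
        · subst hy; rw [hnk0]; ring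
        · rw [hck y hy]; ring
      omega
    · exact hck x hx
  -- span
  have hspan' : ∀ α ∈ Φ, ∃ c : X → ℤ, α = ∑ x, (c x : ℝ) • γ' x := by
    intro α hα
    obtain ⟨c, hc⟩ := hspan α hα
    obtain ⟨T, hT⟩ : ∃ T : ℤ, T = ∑ y, c y * n y := ⟨_, rfl⟩
    refine ⟨fun x => c x - if x = k then T else 0, ?_⟩
    rw [sumrel]
    have hTT : (∑ y, (c y - if y = k then T else 0) * n y) = T := by
      have e1 : ∀ y ∈ Finset.univ, (c y - if y = k then T else 0) * n y
          = c y * n y - (if y = k then T else 0) * n y := fun y _ => by ring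
      rw [Finset.sum_congr rfl e1, Finset.sum_sub_distrib]
      have e2 : ∑ y, (if y = k then T else 0) * n y = 0 := by
        rw [Finset.sum_eq_zero]
        intro y _
        by_cases hy : y = k
        · subst hy; rw [hnk0]; ring
        · rw [if_neg hy]; ring
      rw [e2, ← hT]; ring
    have key : ∀ x, ((c x - if x = k then T else 0)
        + if x = k then (∑ y, (c y - if y = k then T else 0) * n y) else 0) = c x := by
      intro x
      rw [hTT]
      by_cases hx : x = k <;> simp [hx]
    rw [hc]
    refine Finset.sum_congr rfl fun x _ => ?_
    rw [key x]
  refine ⟨hmem, hli', hspan', fun x => hlen _ (hmem x), ?_⟩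
  -- Gram condition
  intro x y hxy
  have tri := stmt12_tri B γ hcyc hA
  have hγk : γ' k = γ k := by
    rw [hγ' k, if_neg (by rw [hB0]; norm_num)]
  by_cases hxk : x = k
  · -- x = k
    have hyk : y ≠ k := fun h => hxy (hxk.trans h.symm)
    rw [hxk]
    have hb := hcomp y k hyk
    have hBk : (B' k y : ℝ) = -(B k y : ℝ) := by
      rw [hB' k y, if_pos (Or.inl rfl)]; push_cast; ring
    have habs : |(B k y : ℝ)| = |(B y k : ℝ)| := by
      rw [hskew y k]; push_cast; rw [abs_neg]
    rw [hγk, hBk, abs_neg, habs, ← hb]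
    by_cases hy1 : B y k = 1
    · rw [hγ' y, if_pos hy1]
      have he : ⟪γ k, γ y - ⟪γ y, γ k⟫ • γ k⟫ = -⟪γ y, γ k⟫ := by
        rw [inner_sub_right, real_inner_smul_right, hlen (γ k) (hγΦ k),
          real_inner_comm (γ k) (γ y)]
        ring
      rw [he, abs_neg]
    · rw [hγ' y, if_neg hy1, real_inner_comm]
  by_cases hyk : y = k
  · -- y = k
    rw [hyk, hγk]
    have hb := hcomp x k hxk
    have hBk : (B' x k : ℝ) = -(B x k : ℝ) := by
      rw [hB' x k, if_pos (Or.inr rfl)]; push_cast; ring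
    rw [hBk, abs_neg, ← hb]
    by_cases hx1 : B x k = 1
    · rw [hγ' x, if_pos hx1]
      have he : ⟪γ x - ⟪γ x, γ k⟫ • γ k, γ k⟫ = -⟪γ x, γ k⟫ := by
        rw [inner_sub_left, real_inner_smul_left, hlen (γ k) (hγΦ k)]; ring
      rw [he, abs_neg]
    · rw [hγ' x, if_neg hx1]
  -- main case: x ≠ k, y ≠ k
  have hBne : ¬(x = k ∨ y = k) := by tauto
  have hky : k ≠ y := fun h => hyk h.symm
  have ha := hcomp x k hxk
  have hbv := hcomp y k hyk
  have hg := hcomp x y hxy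
  by_cases hx1 : B x k = 1
  · have hax : ⟪γ x, γ k⟫ = 1 ∨ ⟪γ x, γ k⟫ = -1 := by
      rcases hval x hxk with h | h
      · left; rw [h, hx1]; norm_num
      · right; rw [h, hx1]; norm_num
    by_cases hy1 : B y k = 1
    · -- both reflected
      have hBky : B k y = -1 := by rw [hskew]; omega
      have hB'e : B' x y = B x y := by
        rw [hB' x y, if_neg hBne, hx1, hBky]; norm_num
      have hinner : ⟪γ' x, γ' y⟫ = ⟪γ x, γ y⟫ := by
        rw [hγ' x, if_pos hx1, hγ' y, if_pos hy1]
        simp only [inner_sub_left, inner_sub_right, real_inner_smul_left,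
          real_inner_smul_right]
        rw [hlen (γ k) (hγΦ k), real_inner_comm (γ k) (γ y)]
        ring
      rw [hinner, hB'e, hg]
    · have hyv : B y k = 0 ∨ B y k = -1 := by have := hent y k; tauto
      rcases hyv with hy0 | hym
      · -- B y k = 0
        have hb0 : ⟪γ y, γ k⟫ = 0 := by
          rw [hy0] at hbv; simpa using hbv
        have hB'e : B' x y = B x y := by
          have hk0 : B k y = 0 := by rw [hskew]; omega
          rw [hB' x y, if_neg hBne, hx1, hk0]; norm_num
        have hinner : ⟪γ' x, γ' y⟫ = ⟪γ x, γ y⟫ := by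
          rw [hγ' x, if_pos hx1, hγ' y, if_neg hy1, inner_sub_left,
            real_inner_smul_left, real_inner_comm (γ y) (γ k), hb0]
          ring
        rw [hinner, hB'e, hg]
      · -- B y k = -1 : arrows x → k → y
        have hBky : B k y = 1 := by rw [hskew]; omega
        have hB'e : B' x y = B x y + 1 := by
          rw [hB' x y, if_neg hBne, hx1, hBky]; norm_num
        have hby : ⟪γ y, γ k⟫ = 1 ∨ ⟪γ y, γ k⟫ = -1 := by
          rcases hval y hyk with h | h
          · right; rw [h, hym]; norm_num
          · left; rw [h, hym]; norm_num
        have hinner : ⟪γ' x, γ' y⟫ = ⟪γ x, γ y⟫ - ⟪γ y, γ k⟫ * ⟪γ x, γ k⟫ := by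
          rw [hγ' x, if_pos hx1, hγ' y, if_neg hy1, inner_sub_left,
            real_inner_smul_left, real_inner_comm (γ k) (γ y)]
          ring
        rcases hent x y with h0 | h1 | hm1
        · have hg0 : ⟪γ x, γ y⟫ = 0 := by rw [h0] at hg; simpa using hg
          rw [hinner, hg0, hB'e, h0]
          rcases hax with h | h <;> rcases hby with h' | h' <;> rw [h, h'] <;> norm_num
        · exfalso
          have := (tri x k y hxk hky hxy hx1 hBky).2
          apply this; rw [hskew]; omega
        · have hByx : B y x = 1 := by rw [hskew]; omega
          have hlt := (tri x k y hxk hky hxy hx1 hBky).1 hByx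
          rw [real_inner_comm (γ y) (γ k), real_inner_comm (γ x) (γ y)] at hlt
          have hg1 : ⟪γ x, γ y⟫ = 1 ∨ ⟪γ x, γ y⟫ = -1 := by
            apply (abs_eq (by norm_num : (0:ℝ) ≤ 1)).mp
            rw [hg, hm1]; norm_num
          rw [hinner, hB'e, hm1]
          rcases hax with h | h <;> rcases hby with h' | h' <;>
            rcases hg1 with h'' | h'' <;> rw [h, h', h''] <;>
            rw [h, h', h''] at hlt <;> norm_num at hlt <;> norm_num
  · by_cases hy1 : B y k = 1
    · -- only y reflected
      have hby : ⟪γ y, γ k⟫ = 1 ∨ ⟪γ y, γ k⟫ = -1 := by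
        rcases hval y hyk with h | h
        · left; rw [h, hy1]; norm_num
        · right; rw [h, hy1]; norm_num
      have hinner : ⟪γ' x, γ' y⟫ = ⟪γ x, γ y⟫ - ⟪γ y, γ k⟫ * ⟪γ x, γ k⟫ := by
        rw [hγ' x, if_neg hx1, hγ' y, if_pos hy1, inner_sub_right,
          real_inner_smul_right]
      have hxv : B x k = 0 ∨ B x k = -1 := by have := hent x k; tauto
      rcases hxv with hx0 | hxm
      · have ha0 : ⟪γ x, γ k⟫ = 0 := by
          rw [hx0] at ha; simpa using ha
        have hB'e : B' x y = B x y := by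
          rw [hB' x y, if_neg hBne, hx0]; norm_num
        rw [hinner, ha0, hB'e]
        rw [mul_zero, sub_zero, hg]
      · -- B x k = -1 : arrows y → k → x
        have hBkx : B k x = 1 := by rw [hskew]; omega
        have hBky : B k y = -1 := by rw [hskew]; omega
        have hB'e : B' x y = B x y - 1 := by
          rw [hB' x y, if_neg hBne, hxm, hBky]; simp only [abs_neg, abs_one]; omega
        have hax : ⟪γ x, γ k⟫ = 1 ∨ ⟪γ x, γ k⟫ = -1 := by
          rcases hval x hxk with h | h
          · right; rw [h, hxm]; norm_num
          · left; rw [h, hxm]; norm_num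
        rcases hent x y with h0 | h1 | hm1
        · have hg0 : ⟪γ x, γ y⟫ = 0 := by rw [h0] at hg; simpa using hg
          rw [hinner, hg0, hB'e, h0]
          rcases hax with h | h <;> rcases hby with h' | h' <;> rw [h, h'] <;> norm_num
        · -- B x y = 1 : cycle y → k → x → y
          have hlt := (tri y k x hyk (fun h => hxk h.symm) (fun h => hxy h.symm)
            hy1 hBkx).1 h1
          rw [real_inner_comm (γ x) (γ k)] at hlt
          have hg1 : ⟪γ x, γ y⟫ = 1 ∨ ⟪γ x, γ y⟫ = -1 := by
            apply (abs_eq (by norm_num : (0:ℝ) ≤ 1)).mp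
            rw [hg, h1]; norm_num
          rw [hinner, hB'e, h1]
          rcases hax with h | h <;> rcases hby with h' | h' <;>
            rcases hg1 with h'' | h'' <;> rw [h, h', h''] <;>
            rw [h, h', h''] at hlt <;> norm_num at hlt <;> norm_num
        · exfalso
          have := (tri y k x hyk (fun h => hxk h.symm) (fun h => hxy h.symm)
            hy1 hBkx).2
          exact this hm1
    · -- neither reflected
      have hB'e : B' x y = B x y := by
        have h1 : B x k = 0 ∨ B x k = -1 := by have := hent x k; tauto
        have h2 : B k y = 0 ∨ B k y = 1 := by
          have h3 := hent y k; have h4 := hskew y k; omega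
        rcases h1 with h | h <;> rcases h2 with h' | h' <;>
          rw [hB' x y, if_neg hBne, h, h'] <;> norm_num
      rw [hγ' x, if_neg hx1, hγ' y, if_neg hy1, hg, hB'e]
end

section
/- Let Φ be a root system of type A_n and Ψ = {γ_x} a companion basis for the quiver Γ of a cluster-tilted algebra of type A_n. For any nontrivial string in Γ with consecutive vertices x_0, x_1, ..., x_t, the element s_{γ_{x_t}} ⋯ s_{γ_{x_1}}(γ_{x_0}) is a root whose support (the set of basis elements appearing with nonzero coefficient in its expansion in Ψ) is exactly {x_0, x_1, ..., x_t}. -/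
open scoped RealInnerProductSpace

/-- Signs appearing in the expansion of the reflected element. -/
noncomputable def epsSeq {V : Type*} [NormedAddCommGroup V] [InnerProductSpace ℝ V]
    (g : ℕ → V) : ℕ → ℝ
  | 0 => 1
  | i + 1 => -(epsSeq g i) * ⟪g (i + 1), g i⟫

lemma epsSeq_pm {V : Type*} [NormedAddCommGroup V] [InnerProductSpace ℝ V]
    (g : ℕ → V) (t : ℕ)
    (hadj : ∀ i, i + 1 ≤ t → ⟪g (i + 1), g i⟫ = 1 ∨ ⟪g (i + 1), g i⟫ = -1) :
    ∀ r, r ≤ t → epsSeq g r = 1 ∨ epsSeq g r = -1 := by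
  intro r
  induction r with
  | zero => intro _; left; rfl
  | succ n ih =>
    intro h
    have h1 : n ≤ t := Nat.le_of_succ_le h
    rcases ih h1 with he | he <;> rcases hadj n h with ha | ha <;>
      simp [epsSeq, he, ha]

lemma applySeq_eq_sum {V : Type*} [NormedAddCommGroup V] [InnerProductSpace ℝ V]
    (g : ℕ → V) (t : ℕ)
    (horth : ∀ i j, i + 2 ≤ j → j ≤ t → ⟪g j, g i⟫ = 0) :
    ∀ r, r ≤ t →
      applySeq g r (g 0) = ∑ i ∈ Finset.range (r + 1), epsSeq g i • g i := by
  intro r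
  induction r with
  | zero => intro _; simp [applySeq, epsSeq]
  | succ n ih =>
    intro h
    have h1 : n ≤ t := Nat.le_of_succ_le h
    have hv := ih h1
    have hinner : ⟪applySeq g n (g 0), g (n + 1)⟫ =
        epsSeq g n * ⟪g (n + 1), g n⟫ := by
      rw [hv, sum_inner]
      rw [Finset.sum_eq_single n]
      · rw [real_inner_smul_left, real_inner_comm]
      · intro i hi hne
        have hi' : i < n + 1 := Finset.mem_range.mp hi
        have : i + 2 ≤ n + 1 := by omega
        rw [real_inner_smul_left, real_inner_comm, horth i (n+1) this h, mul_zero]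
      · intro hn; exact absurd (Finset.self_mem_range_succ n) hn
    show sref (g (n + 1)) (applySeq g n (g 0)) = _
    rw [sref, hinner, Finset.sum_range_succ, ← hv]
    rw [show epsSeq g (n+1) = -(epsSeq g n) * ⟪g (n + 1), g n⟫ from rfl]
    rw [sub_eq_add_neg, ← neg_smul]
    ring_nf

/-- Let `Ψ = {γ_x}` be a companion basis (a `ℤ`-basis of roots of
the root lattice) for the quiver of a cluster-tilted algebra of type `A`, and
let `x_0, x_1, ..., x_t` be the consecutive vertices of a nontrivial string, so
that `(γ_{x_i}, γ_{x_j}) = ±1` when `|i - j| = 1` and `0` when `|i - j| ≥ 2`.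
Then `s_{γ_{x_t}} ⋯ s_{γ_{x_1}}(γ_{x_0})` is a root whose support with respect
to `Ψ` is exactly `{x_0, x_1, ..., x_t}`. -/
theorem stmt17 {V : Type*} [NormedAddCommGroup V] [InnerProductSpace ℝ V]
    {X : Type*} [Fintype X]
    (Φ : Set V)
    (hlen : ∀ α ∈ Φ, ⟪α, α⟫ = 2)
    (hrefl : ∀ α ∈ Φ, ∀ β ∈ Φ, β - ⟪β, α⟫ • α ∈ Φ)
    (γ : X → V) (hγΦ : ∀ x, γ x ∈ Φ)
    (hli : LinearIndependent ℝ γ)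
    (hspan : ∀ α ∈ Φ, ∃ c : X → ℤ, α = ∑ y, (c y : ℝ) • γ y)
    (t : ℕ) (ht : 1 ≤ t) (x : ℕ → X)
    (hinj : ∀ i j, i ≤ t → j ≤ t → x i = x j → i = j)
    (hadj : ∀ i, i + 1 ≤ t →
      ⟪γ (x (i + 1)), γ (x i)⟫ = 1 ∨ ⟪γ (x (i + 1)), γ (x i)⟫ = -1)
    (horth : ∀ i j, i + 2 ≤ j → j ≤ t → ⟪γ (x j), γ (x i)⟫ = 0) :
    applySeq (fun i => γ (x i)) t (γ (x 0)) ∈ Φ ∧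
    ∀ c : X → ℤ, applySeq (fun i => γ (x i)) t (γ (x 0)) = ∑ y, (c y : ℝ) • γ y →
      {y | c y ≠ 0} = {y | ∃ i, i ≤ t ∧ x i = y} := by
  set g : ℕ → V := fun i => γ (x i) with hg
  constructor
  · -- membership in Φ by induction
    have : ∀ r, applySeq g r (g 0) ∈ Φ := by
      intro r
      induction r with
      | zero => exact hγΦ (x 0)
      | succ n ih =>
        show sref (g (n+1)) (applySeq g n (g 0)) ∈ Φ
        exact hrefl (g (n+1)) (hγΦ (x (n+1))) _ ih
    exact this t
  · classical
    intro c hc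
    have hsum := applySeq_eq_sum g t horth t le_rfl
    have heps := epsSeq_pm g t hadj
    -- the canonical coefficient function
    set e : X → ℝ := fun y => ∑ i ∈ Finset.range (t + 1),
      (if x i = y then epsSeq g i else 0) with he
    have hesum : applySeq g t (g 0) = ∑ y, e y • γ y := by
      rw [hsum, he]
      rw [Finset.sum_congr rfl (fun y _ => Finset.sum_smul ..)]
      rw [Finset.sum_comm]
      refine Finset.sum_congr rfl fun i _ => ?_
      rw [Finset.sum_congr rfl (fun y _ => ite_smul ..)]
      simp [Finset.sum_ite_eq, hg]
    have hce : ∀ y, (c y : ℝ) = e y := by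
      have h0 : ∑ y, ((c y : ℝ) - e y) • γ y = 0 := by
        simp only [sub_smul, Finset.sum_sub_distrib]
        rw [← hc, ← hesum, sub_self]
      have := Fintype.linearIndependent_iff.mp hli _ h0
      intro y
      have hy := this y
      linarith
    ext y
    simp only [Set.mem_setOf_eq]
    constructor
    · intro hcy
      by_contra hno
      push_neg at hno
      apply hcy
      have he0 : e y = 0 := by
        rw [he]
        apply Finset.sum_eq_zero
        intro i hi
        exact if_neg (hno i (by have := Finset.mem_range.mp hi; omega))
      have := (hce y).trans he0
      exact_mod_cast this
    · rintro ⟨i, hit, hxy⟩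
      have hne : e y ≠ 0 := by
        show (∑ i ∈ Finset.range (t + 1), if x i = y then epsSeq g i else 0) ≠ 0
        rw [Finset.sum_eq_single_of_mem i (Finset.mem_range.mpr (by omega))]
        · rw [if_pos hxy]
          rcases heps i hit with h | h <;> rw [h] <;> norm_num
        · intro j hj hne
          rw [if_neg]
          intro hxj
          exact hne (hinj j i (by have := Finset.mem_range.mp hj; omega) hit (hxj.trans hxy.symm))
      intro hcy
      apply hne
      rw [← hce y, hcy, Int.cast_zero]
end

section
/- Let Γ be the quiver of a cluster-tilted algebra of Dynkin type A_n and Ψ a companion basis for Γ. Then the map sending a string p in Γ to the unique positive root whose support (with respect to Ψ) is the vertex set of p is a bijection between the set of strings in Γ and the set of positive roots Φ⁺. Consequently, the vectors d_α^Ψ for α ∈ Φ⁺ are exactly the 0-1 vectors that are characteristic vectors of vertex sets of strings in Γ, i.e., the dimension vectors of the indecomposable modules over the cluster-tilted algebra. -/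
open scoped RealInnerProductSpace

/-- The standard basis vector `e_i` of `ℝ^{n+1}`. -/
noncomputable def eA (n : ℕ) (i : Fin (n + 1)) : EuclideanSpace ℝ (Fin (n + 1)) :=
  EuclideanSpace.single i (1 : ℝ)

/-- The root system of type `A_n`: `{e_i - e_j : i ≠ j}`. -/
def rootsA (n : ℕ) : Set (EuclideanSpace ℝ (Fin (n + 1))) :=
  {v | ∃ i j : Fin (n + 1), i ≠ j ∧ v = eA n i - eA n j}

/-- The positive roots of type `A_n`: `{e_i - e_j : i < j}`. -/
def posRootsA (n : ℕ) : Set (EuclideanSpace ℝ (Fin (n + 1))) :=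
  {v | ∃ i j : Fin (n + 1), i < j ∧ v = eA n i - eA n j}

/-- `s` is the vertex set of a string of the quiver of `B` from `p` to `q`:
there is a sequence of distinct vertices `x_0 = p, x_1, ..., x_t = q` with
consecutive vertices joined by an arrow and non-consecutive vertices not joined
(in the quiver of a cluster-tilted algebra of type `A`, strings are exactly such
induced paths), and `s = {x_0, ..., x_t}`. -/
def IsStringBetween {X : Type*} (B : Matrix X X ℤ) (s : Set X) (p q : X) : Prop :=
  ∃ (t : ℕ) (x : ℕ → X),
    (∀ i j, i ≤ t → j ≤ t → x i = x j → i = j) ∧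
    (∀ i, i + 1 ≤ t → B (x i) (x (i + 1)) ≠ 0) ∧
    (∀ i j, i + 2 ≤ j → j ≤ t → B (x i) (x j) = 0) ∧
    x 0 = p ∧ x t = q ∧ s = {y | ∃ i, i ≤ t ∧ x i = y}

/-- The support of `α = Σ c_x γ_x` with respect to the basis `γ` is `s`. -/
def SuppIs {V X : Type*} [NormedAddCommGroup V] [Module ℝ V] [Fintype X]
    (γ : X → V) (α : V) (s : Set X) : Prop :=
  ∃ c : X → ℤ, α = ∑ x, (c x : ℝ) • γ x ∧ s = {y | c y ≠ 0}

lemma stmt18aux_hee {n : ℕ} (i j : Fin (n + 1)) :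
    ⟪eA n i, eA n j⟫ = if i = j then 1 else 0 := by
  simp [eA, EuclideanSpace.inner_single_left, EuclideanSpace.single_apply, eq_comm]

lemma stmt18aux_eA_inj {n : ℕ} {i j k l : Fin (n + 1)} (hij : i ≠ j)
    (h : eA n i - eA n j = eA n k - eA n l) : i = k ∧ j = l := by
  have hi := congrArg (fun w => ⟪eA n i, w⟫) h
  have hj := congrArg (fun w => ⟪eA n j, w⟫) h
  simp only [inner_sub_right, stmt18aux_hee, if_pos rfl, if_true] at hi hj
  rw [if_neg hij] at hi
  rw [if_neg (Ne.symm hij)] at hj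
  norm_num at hi hj
  constructor
  · by_cases h1 : i = k
    · exact h1
    · rw [if_neg h1] at hi; split_ifs at hi <;> norm_num at hi
  · by_cases h2 : j = l
    · exact h2
    · rw [if_neg h2] at hj; split_ifs at hj <;> norm_num at hj

section aux
variable {X : Type*} [Fintype X] [DecidableEq X] {M : Type*} [AddCommGroup M] [Module ℝ M]
  {γ : X → M}

lemma stmt18aux_li_eq (hli : LinearIndependent ℤ γ) (c d : X → ℤ)
    (h : ∑ x, (c x : ℝ) • γ x = ∑ x, (d x : ℝ) • γ x) : c = d := by
  have h2 := (Fintype.linearIndependent_iff.1 hli) (c - d) ?_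
  · funext z; have := h2 z; simp [Pi.sub_apply, sub_eq_zero] at this ⊢; omega
  · have : ∀ x, (c - d) x • γ x = (c x : ℝ) • γ x - (d x : ℝ) • γ x := by
      intro x
      rw [← Int.cast_smul_eq_zsmul ℝ]
      push_cast [Pi.sub_apply]
      rw [sub_smul]
    simp only [this, Finset.sum_sub_distrib, h, sub_self]

lemma stmt18aux_li_pair (hli : LinearIndependent ℤ γ) {x y : X} (hxy : x ≠ y) (s t : ℤ)
    (h : (s : ℝ) • γ x + (t : ℝ) • γ y = 0) : s = 0 ∧ t = 0 := by
  have key := stmt18aux_li_eq hli (fun z => if z = x then s else if z = y then t else 0) 0 ?_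
  · constructor
    · have := congrFun key x; simpa using this
    · have := congrFun key y; simpa [hxy.symm] using this
  · have hz : ∑ z : X, ((0 : X → ℤ) z : ℝ) • γ z = 0 := by simp
    rw [hz, ← h]
    have : ∀ z, ((if z = x then s else if z = y then t else 0 : ℤ) : ℝ) • γ z
        = (if z = x then (s:ℝ) • γ x else 0) + (if z = y then (t:ℝ) • γ y else 0) := by
      intro z
      by_cases h1 : z = x
      · subst h1; simp [hxy]
      · by_cases h2 : z = y
        · subst h2; simp [h1]
        · simp [h1, h2]
    rw [Finset.sum_congr rfl (fun z _ => this z), Finset.sum_add_distrib]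
    simp [Finset.sum_ite_eq']
end aux


lemma stmt18aux_pathExpand {n : ℕ} {X : Type*} [Fintype X] [DecidableEq X]
    (γ : X → EuclideanSpace ℝ (Fin (n + 1))) (a b : X → Fin (n + 1))
    (hγ : ∀ x, γ x = eA n (a x) - eA n (b x))
    (hEinj : ∀ x y : X, s(a x, b x) = s(a y, b y) → x = y)
    {G : SimpleGraph (Fin (n + 1))}
    (hAdj : ∀ i j, G.Adj i j → ∃ x, s(a x, b x) = s(i, j))
    {i j : Fin (n + 1)} (w : G.Walk i j) (hw : w.edges.Nodup) :
    ∃ c : X → ℤ,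
      eA n i - eA n j = ∑ x, (c x : ℝ) • γ x ∧
      (∀ x, c x ≠ 0 ↔ s(a x, b x) ∈ w.edges) ∧
      (∀ x, c x = 0 ∨ c x = 1 ∨ c x = -1) := by
  induction w with
  | nil => exact ⟨0, by simp, by simp, by simp⟩
  | @cons u v w' h p ih =>
    rw [SimpleGraph.Walk.edges_cons, List.nodup_cons] at hw
    obtain ⟨c', hc'sum, hc'supp, hc'val⟩ := ih hw.2
    obtain ⟨x₀, hx₀⟩ := hAdj _ _ h
    have huv : u ≠ v := h.ne
    have hcases := Sym2.eq_iff.1 hx₀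
    set σ : ℤ := if a x₀ = u then 1 else -1 with hσ
    have hγx₀ : (σ : ℝ) • γ x₀ = eA n u - eA n v := by
      rcases hcases with ⟨h1, h2⟩ | ⟨h1, h2⟩
      · rw [hσ, if_pos h1, hγ, h1, h2]; simp
      · have hne : a x₀ ≠ u := by rw [h1]; exact fun hh => huv hh.symm
        rw [hσ, if_neg hne, hγ, h1, h2]; push_cast; rw [neg_smul, one_smul, neg_sub]
    have hc'x₀ : c' x₀ = 0 := by
      by_contra hne
      exact hw.1 (hx₀ ▸ (hc'supp x₀).1 hne)
    refine ⟨fun z => c' z + if z = x₀ then σ else 0, ?_, ?_, ?_⟩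
    · have hsplit : ∀ z : X, ((c' z + if z = x₀ then σ else 0 : ℤ) : ℝ) • γ z
          = (c' z : ℝ) • γ z + (if z = x₀ then (σ:ℝ) • γ x₀ else 0) := by
        intro z
        by_cases hz : z = x₀ <;> push_cast [hz] <;> simp [add_smul]
      rw [Finset.sum_congr rfl (fun z _ => hsplit z), Finset.sum_add_distrib,
        Finset.sum_ite_eq' Finset.univ x₀ (fun _ => (σ:ℝ) • γ x₀)]
      simp only [Finset.mem_univ, if_true]
      rw [← hc'sum, hγx₀]
      abel
    · intro z
      rw [SimpleGraph.Walk.edges_cons, List.mem_cons]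
      by_cases hz : z = x₀
      · subst hz
        simp only [if_pos rfl, hc'x₀, zero_add]
        constructor
        · intro _; exact Or.inl hx₀
        · intro _; rw [hσ]; split_ifs <;> simp
      · simp only [if_neg hz, add_zero]
        rw [hc'supp z]
        constructor
        · exact Or.inr
        · rintro (h1 | h1)
          · exact absurd (hEinj _ _ (h1.trans hx₀.symm)) hz
          · exact h1
    · intro z
      beta_reduce
      by_cases hz : z = x₀
      · subst hz; rw [if_pos rfl, hc'x₀, zero_add, hσ]; split_ifs <;> simp
      · rw [if_neg hz, add_zero]; exact hc'val z

lemma stmt18aux_pathString {n : ℕ} {X : Type*} [Fintype X] [DecidableEq X]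
    (B : Matrix X X ℤ) (a b : X → Fin (n + 1))
    (hEinj : ∀ x y : X, s(a x, b x) = s(a y, b y) → x = y)
    {G : SimpleGraph (Fin (n + 1))}
    (hAdj : ∀ i j, G.Adj i j → ∃ x, s(a x, b x) = s(i, j))
    (hBne : ∀ x y : X, x ≠ y →
      (∃ v, (v = a x ∨ v = b x) ∧ (v = a y ∨ v = b y)) → B x y ≠ 0)
    (hBz : ∀ x y : X, x ≠ y →
      (∀ v, ¬((v = a x ∨ v = b x) ∧ (v = a y ∨ v = b y))) → B x y = 0)
    {i j : Fin (n + 1)} (w : G.Walk i j) (hw : w.IsPath) (hij : i ≠ j) :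
    ∃ (t : ℕ) (x : ℕ → X),
      (∀ k l, k ≤ t → l ≤ t → x k = x l → k = l) ∧
      (∀ k, k + 1 ≤ t → B (x k) (x (k + 1)) ≠ 0) ∧
      (∀ k l, k + 2 ≤ l → l ≤ t → B (x k) (x l) = 0) ∧
      {y | ∃ k, k ≤ t ∧ x k = y} = {z | s(a z, b z) ∈ w.edges} ∧
      (∀ k, k ≤ t → ((i = a (x k) ∨ i = b (x k)) ↔ k = 0)) := by
  induction w with
  | nil => exact absurd rfl hij
  | @cons u v w' h p ih =>
    obtain ⟨hp, hup⟩ := (SimpleGraph.Walk.cons_isPath_iff h p).1 hw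
    obtain ⟨x₀, hx₀⟩ := hAdj _ _ h
    have huv : u ≠ v := h.ne
    have hux₀ : u = a x₀ ∨ u = b x₀ := by
      rcases Sym2.eq_iff.1 hx₀ with ⟨h1, _⟩ | ⟨_, h2⟩
      · exact Or.inl h1.symm
      · exact Or.inr h2.symm
    have hvx₀ : v = a x₀ ∨ v = b x₀ := by
      rcases Sym2.eq_iff.1 hx₀ with ⟨_, h2⟩ | ⟨h1, _⟩
      · exact Or.inr h2.symm
      · exact Or.inl h1.symm
    by_cases hvw : v = w'
    · subst hvw
      have hpnil : p = SimpleGraph.Walk.nil := SimpleGraph.Walk.isPath_iff_eq_nil.1 hp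
      subst hpnil
      refine ⟨0, fun _ => x₀, ?_, ?_, ?_, ?_, ?_⟩
      · intro k l hk hl _; omega
      · intro k hk; omega
      · intro k l hk hl; omega
      · ext z
        simp only [Set.mem_setOf_eq, SimpleGraph.Walk.edges_cons,
          SimpleGraph.Walk.edges_nil, List.mem_cons, List.not_mem_nil, or_false]
        constructor
        · rintro ⟨k, _, rfl⟩; exact hx₀
        · intro hz; exact ⟨0, le_refl 0, (hEinj _ _ (hz.trans hx₀.symm)).symm⟩
      · intro k hk
        simp only [Nat.le_zero] at hk
        subst hk
        simp only [eq_self_iff_true, iff_true]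
        exact hux₀
    · -- v ≠ w'
      obtain ⟨t', x', hinj', hcons', hfar', hset', hstart'⟩ := ih hp hvw
      have hmemP : ∀ m, m ≤ t' → s(a (x' m), b (x' m)) ∈ p.edges := by
        intro m hm
        have : x' m ∈ {y | ∃ k, k ≤ t' ∧ x' k = y} := ⟨m, hm, rfl⟩
        rw [hset'] at this; exact this
      have hN : ∀ m, m ≤ t' → x₀ ≠ x' m := by
        intro m hm heq
        have hmem := hmemP m hm
        rw [← heq, hx₀] at hmem
        exact hup (SimpleGraph.Walk.fst_mem_support_of_mem_edges p hmem)
      have hI : ∀ m, m ≤ t' → ¬(u = a (x' m) ∨ u = b (x' m)) := by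
        intro m hm hu
        have hmem := hmemP m hm
        rcases hu with hu | hu
        · rw [← hu] at hmem
          exact hup (SimpleGraph.Walk.fst_mem_support_of_mem_edges p hmem)
        · rw [← hu] at hmem
          exact hup (SimpleGraph.Walk.snd_mem_support_of_mem_edges p hmem)
      refine ⟨t' + 1, fun m => if m = 0 then x₀ else x' (m - 1), ?_, ?_, ?_, ?_, ?_⟩
      · intro k l hk hl heq
        beta_reduce at heq
        by_cases hk0 : k = 0 <;> by_cases hl0 : l = 0
        · omega
        · rw [if_pos hk0, if_neg hl0] at heq
          exact absurd heq (hN (l - 1) (by omega))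
        · rw [if_neg hk0, if_pos hl0] at heq
          exact absurd heq.symm (hN (k - 1) (by omega))
        · rw [if_neg hk0, if_neg hl0] at heq
          have := hinj' (k - 1) (l - 1) (by omega) (by omega) heq
          omega
      · intro k hk
        by_cases hk0 : k = 0
        · subst hk0
          simp only [if_pos rfl, if_neg (by omega : ¬(0 + 1 = 0))]
          apply hBne _ _ (hN (1 - 1) (by omega))
          exact ⟨v, hvx₀, by simpa using (hstart' 0 (by omega)).2 rfl⟩
        · simp only [if_neg hk0, if_neg (by omega : ¬(k + 1 = 0))]
          have : k + 1 - 1 = (k - 1) + 1 := by omega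
          rw [this]
          exact hcons' (k - 1) (by omega)
      · intro k l hkl hl
        by_cases hk0 : k = 0
        · subst hk0
          simp only [if_pos rfl, if_neg (by omega : ¬(l = 0))]
          apply hBz _ _ (hN (l - 1) (by omega))
          rintro z ⟨hz1, hz2⟩
          have hzuv : z = u ∨ z = v := by
            rcases Sym2.eq_iff.1 hx₀ with ⟨h1, h2⟩ | ⟨h1, h2⟩ <;>
              rcases hz1 with hz | hz <;> subst hz <;> tauto
          rcases hzuv with rfl | rfl
          · exact hI (l - 1) (by omega) hz2
          · have := (hstart' (l - 1) (by omega)).1 hz2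
            omega
        · simp only [if_neg hk0, if_neg (by omega : ¬(l = 0))]
          exact hfar' (k - 1) (l - 1) (by omega) (by omega)
      · ext z
        simp only [Set.mem_setOf_eq, SimpleGraph.Walk.edges_cons, List.mem_cons]
        constructor
        · rintro ⟨k, hk, rfl⟩
          by_cases hk0 : k = 0
          · simp only [hk0, if_pos rfl]; exact Or.inl hx₀
          · simp only [if_neg hk0]
            exact Or.inr (hmemP (k - 1) (by omega))
        · rintro (hz | hz)
          · exact ⟨0, by omega, by simp [(hEinj _ _ (hz.trans hx₀.symm)).symm]⟩
          · have : z ∈ {y | ∃ k, k ≤ t' ∧ x' k = y} := by rw [hset']; exact hz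
            obtain ⟨k, hk, hkz⟩ := this
            exact ⟨k + 1, by omega, by simp [hkz]⟩
      · intro k hk
        by_cases hk0 : k = 0
        · subst hk0
          simp only [if_pos rfl, eq_self_iff_true, iff_true]
          exact hux₀
        · simp only [if_neg hk0]
          constructor
          · intro hu; exact absurd hu (hI (k - 1) (by omega))
          · intro h; exact absurd h hk0

lemma stmt18aux_stringOrient {m : ℕ} {X : Type*}
    (a b : X → Fin m) (hab : ∀ x, a x ≠ b x)
    (t : ℕ) (x : ℕ → X)
    (hnd : ∀ k l, k ≤ t → l ≤ t → k ≠ l →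
      ¬((a (x k) = a (x l) ∧ b (x k) = b (x l)) ∨ (a (x k) = b (x l) ∧ b (x k) = a (x l))))
    (hcons : ∀ k, k + 1 ≤ t →
      ∃ v, (v = a (x k) ∨ v = b (x k)) ∧ (v = a (x (k + 1)) ∨ v = b (x (k + 1))))
    (hfar : ∀ k l, k + 2 ≤ l → l ≤ t →
      ∀ v, ¬((v = a (x k) ∨ v = b (x k)) ∧ (v = a (x l) ∨ v = b (x l)))) :
    ∃ v : ℕ → Fin m,
      (∀ k, k ≤ t → (v k = a (x k) ∧ v (k + 1) = b (x k)) ∨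
        (v k = b (x k) ∧ v (k + 1) = a (x k))) ∧
      (∀ k l, k ≤ t + 1 → l ≤ t + 1 → v k = v l → k = l) := by
  classical
  set mem : Fin m → ℕ → Prop := fun w k => w = a (x k) ∨ w = b (x k) with hmem
  -- uniqueness of common vertex of consecutive edges
  have hCU : ∀ k, k + 1 ≤ t → ∀ w w', mem w k → mem w (k + 1) → mem w' k → mem w' (k + 1) →
      w = w' := by
    intro k hk w w' h1 h2 h3 h4
    by_contra hne
    apply hnd k (k + 1) (by omega) hk (by omega)
    rcases h1 with rfl | rfl <;> rcases h3 with rfl | rfl <;>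
      rcases h2 with h2 | h2 <;> rcases h4 with h4 | h4 <;>
      first
        | (exfalso; grind)
        | (left; exact ⟨by grind, by grind⟩)
        | (right; exact ⟨by grind, by grind⟩)
  rcases Nat.eq_zero_or_pos t with rfl | ht
  · refine ⟨fun k => if k = 0 then a (x 0) else b (x 0), ?_, ?_⟩
    · intro k hk
      interval_cases k
      exact Or.inl ⟨by simp, by simp⟩
    · intro k l hk hl heq
      interval_cases k <;> interval_cases l <;> first
        | rfl
        | (exfalso; revert heq; simp; exact hab (x 0))
        | (exfalso; revert heq; simp; exact fun h => hab (x 0) h.symm)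
  -- t ≥ 1
  set common : ℕ → Fin m := fun k => if mem (a (x k)) (k + 1) then a (x k) else b (x k)
    with hcommon
  have hC1 : ∀ k, k + 1 ≤ t → mem (common k) k := by
    intro k hk
    rw [hcommon]; beta_reduce
    split_ifs with h
    · exact Or.inl rfl
    · exact Or.inr rfl
  have hC2 : ∀ k, k + 1 ≤ t → mem (common k) (k + 1) := by
    intro k hk
    obtain ⟨w, hw1, hw2⟩ := hcons k hk
    rw [hcommon]; beta_reduce
    split_ifs with h
    · exact h
    · rcases hw1 with rfl | rfl
      · exact absurd hw2 h
      · exact hw2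
  set v : ℕ → Fin m := fun k =>
    if k = 0 then (if mem (a (x 0)) 1 then b (x 0) else a (x 0))
    else if k ≤ t then common (k - 1)
    else (if common (t - 1) = a (x t) then b (x t) else a (x t)) with hv
  have hv0 : v 0 = (if mem (a (x 0)) 1 then b (x 0) else a (x 0)) := by simp [hv]
  have hvk : ∀ k, 1 ≤ k → k ≤ t → v k = common (k - 1) := by
    intro k h1 h2
    simp only [hv]
    rw [if_neg (by omega : ¬ k = 0), if_pos h2]
  have hvlast : v (t + 1) = (if common (t - 1) = a (x t) then b (x t) else a (x t)) := by
    simp [hv, (by omega : ¬ t + 1 = 0), (by omega : ¬ t + 1 ≤ t)]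
  have hM1 : ∀ k, k ≤ t → mem (v k) k := by
    intro k hk
    rcases Nat.eq_zero_or_pos k with rfl | hk1
    · rw [hv0]; split_ifs
      · exact Or.inr rfl
      · exact Or.inl rfl
    · rw [hvk k hk1 hk]
      have := hC2 (k - 1) (by omega)
      rwa [(by omega : k - 1 + 1 = k)] at this
  have hM1' : ∀ k, 1 ≤ k → k ≤ t → mem (v k) (k - 1) := by
    intro k h1 h2
    rw [hvk k h1 h2]
    exact hC1 (k - 1) (by omega)
  have hM2 : ∀ k, k ≤ t → mem (v (k + 1)) k := by
    intro k hk
    rcases Nat.lt_or_ge k t with hlt | hge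
    · rw [hvk (k + 1) (by omega) (by omega)]
      simpa using hC1 k (by omega)
    · have hkt : k = t := by omega
      subst hkt
      rw [hvlast]
      split_ifs
      · exact Or.inr rfl
      · exact Or.inl rfl
  have hP3 : ∀ k, k ≤ t → v k ≠ v (k + 1) := by
    intro k hk
    rcases Nat.eq_zero_or_pos k with rfl | hk1
    · rw [hv0, hvk 1 le_rfl (by omega)]
      simp only [Nat.sub_self]
      rw [hcommon]; beta_reduce
      norm_num
      split_ifs with h
      · exact fun heq => hab (x 0) heq.symm
      · exact hab (x 0)
    · rcases Nat.lt_or_ge k t with hlt | hge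
      · -- 1 ≤ k < t
        intro heq
        have h1 : mem (v k) (k - 1) := hM1' k hk1 hk
        have h2 : mem (v (k + 1)) (k + 1) := hM1 (k + 1) (by omega)
        rw [heq] at h1
        exact hfar (k - 1) (k + 1) (by omega) (by omega) (v (k + 1)) ⟨h1, h2⟩
      · -- k = t ≥ 1
        have hkt : k = t := by omega
        rw [hkt]
        rw [hvk t (by omega) le_rfl, hvlast]
        split_ifs with h
        · rw [h]; exact hab (x t)
        · exact h
  have hinj : ∀ k l, k ≤ t + 1 → l ≤ t + 1 → v k = v l → k = l := by
    have key : ∀ k l, k < l → l ≤ t + 1 → v k = v l → False := by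
      intro k l hkl hl heq
      rcases Nat.lt_or_ge (k + 1) l with hl2 | hl2
      swap
      · -- l = k + 1
        have : l = k + 1 := by omega
        subst this
        exact hP3 k (by omega) heq
      · -- l ≥ k + 2
        rcases Nat.lt_or_ge l (t + 1) with hlt | hge
        · exact hfar k l (by omega) (by omega) (v k)
            ⟨hM1 k (by omega), heq ▸ hM1 l (by omega)⟩
        · have hlt1 : l = t + 1 := by omega
          subst hlt1
          have h2 : mem (v (t + 1)) t := hM2 t le_rfl
          rcases Nat.lt_or_ge (k + 2) (t + 1) with hk2 | hk2
          · exact hfar k t (by omega) le_rfl (v k) ⟨hM1 k (by omega), heq ▸ h2⟩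
          · -- k + 2 = t + 1, i.e. t = k + 1
            have hkt : t = k + 1 := by omega
            rcases Nat.eq_zero_or_pos k with rfl | hk1
            · -- k = 0, t = 1
              have hkt1 : t = 1 := by omega
              have h0 : mem (v 0) 0 := hM1 0 (by omega)
              have h1 : mem (v 0) 1 := by rw [heq]; rw [hkt1] at h2 ⊢; exact h2
              have hc0 : v 0 = common 0 :=
                hCU 0 (by omega) _ _ h0 h1 (hC1 0 (by omega)) (hC2 0 (by omega))
              have := hP3 0 (by omega)
              rw [hvk 1 le_rfl (by omega)] at this
              exact this (by simpa using hc0)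
            · have h1 : mem (v k) (k - 1) := hM1' k hk1 (by omega)
              refine hfar (k - 1) t (by omega) le_rfl (v k) ⟨h1, heq ▸ h2⟩
    intro k l hk hl heq
    rcases lt_trichotomy k l with h | h | h
    · exact absurd heq (fun hh => key k l h hl hh)
    · exact h
    · exact absurd heq.symm (fun hh => key l k h hk hh)
  refine ⟨v, ?_, hinj⟩
  intro k hk
  have h1 := hM1 k hk
  have h2 := hM2 k hk
  have hne := hP3 k hk
  rcases h1 with h1 | h1 <;> rcases h2 with h2 | h2
  · exact absurd (h1.trans h2.symm) hne
  · exact Or.inl ⟨h1, h2⟩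
  · exact Or.inr ⟨h1, h2⟩
  · exact absurd (h1.trans h2.symm) hne
/-- Let `Γ` be the quiver of a cluster-tilted algebra of type
`A_n` (skew-symmetric matrix `B` with entries in `{0, ±1}` on `n` vertices,
with a unique string between any two vertices) and `Ψ = {γ_x}` a companion
basis for `Γ`.  Then mapping a string to the unique positive root supported on
its vertex set is a bijection between strings and positive roots, and the
vectors `d_α^Ψ` for `α ∈ Φ⁺` are exactly the characteristic (0-1) vectors of
vertex sets of strings, i.e. the dimension vectors of the indecomposable
modules over the cluster-tilted algebra. -/
theorem stmt18 (n : ℕ) {X : Type*} [Fintype X] [DecidableEq X]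
    (hX : Fintype.card X = n)
    (B : Matrix X X ℤ)
    (hskew : ∀ x y, B y x = - B x y)
    (hent : ∀ x y, B x y = 0 ∨ B x y = 1 ∨ B x y = -1)
    (γ : X → EuclideanSpace ℝ (Fin (n + 1)))
    (hγΦ : ∀ x, γ x ∈ rootsA n)
    (hli : LinearIndependent ℤ γ)
    (hspan : ∀ α ∈ rootsA n, ∃ c : X → ℤ, α = ∑ x, (c x : ℝ) • γ x)
    (hcomp : ∀ x y, x ≠ y → |⟪γ x, γ y⟫| = |(B x y : ℝ)|)
    (hstring : ∀ p q : X, ∃! s : Set X, IsStringBetween B s p q) :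
    (∀ s : Set X, (∃ p q, IsStringBetween B s p q) →
      ∃! α, α ∈ posRootsA n ∧ SuppIs γ α s) ∧
    (∀ α ∈ posRootsA n, ∃! s : Set X,
      (∃ p q, IsStringBetween B s p q) ∧ SuppIs γ α s) ∧
    {d : X → ℕ | ∃ α ∈ posRootsA n, ∃ c : X → ℤ,
        α = ∑ x, (c x : ℝ) • γ x ∧ d = fun x => (c x).natAbs} =
    {d : X → ℕ | ∃ (s : Set X) (p q : X), IsStringBetween B s p q ∧
        d = s.indicator fun _ => 1} := by
  classical
  choose a b hab hγab using fun x => (hγΦ x : ∃ i j, i ≠ j ∧ γ x = eA n i - eA n j)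
  -- inner product formula
  have hinner : ∀ x y : X, ⟪γ x, γ y⟫ =
      (if a x = a y then (1:ℝ) else 0) - (if a x = b y then 1 else 0)
        - (if b x = a y then 1 else 0) + (if b x = b y then 1 else 0) := by
    intro x y
    rw [hγab x, hγab y, inner_sub_left, inner_sub_right, inner_sub_right,
      stmt18aux_hee, stmt18aux_hee, stmt18aux_hee, stmt18aux_hee]
    ring
  -- pairwise data from linear independence
  have hpairne : ∀ x y : X, x ≠ y →
      ¬((a x = a y ∧ b x = b y) ∨ (a x = b y ∧ b x = a y)) := by
    intro x y hxy hor
    rcases hor with ⟨h1, h2⟩ | ⟨h1, h2⟩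
    · have : ((1:ℤ):ℝ) • γ x + ((-1:ℤ):ℝ) • γ y = 0 := by
        rw [hγab x, hγab y, h1, h2]; push_cast; module
      exact one_ne_zero (stmt18aux_li_pair hli hxy 1 (-1) this).1
    · have : ((1:ℤ):ℝ) • γ x + ((1:ℤ):ℝ) • γ y = 0 := by
        rw [hγab x, hγab y, h1, h2]; push_cast; module
      exact one_ne_zero (stmt18aux_li_pair hli hxy 1 1 this).1
  have hEinj : ∀ x y : X, s(a x, b x) = s(a y, b y) → x = y := by
    intro x y hxy
    by_contra hne
    exact hpairne x y hne (Sym2.eq_iff.1 hxy)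
  -- classification of inner products / B entries
  have hval : ∀ x y : X, x ≠ y →
      ((∃ v, (v = a x ∨ v = b x) ∧ (v = a y ∨ v = b y)) ∧ (⟪γ x, γ y⟫ = 1 ∨ ⟪γ x, γ y⟫ = -1))
      ∨ (¬(∃ v, (v = a x ∨ v = b x) ∧ (v = a y ∨ v = b y)) ∧ ⟪γ x, γ y⟫ = 0) := by
    intro x y hxy
    have hx := hab x; have hy := hab y
    have hp := hpairne x y hxy
    by_cases P1 : a x = a y
    · have nP2 : ¬ a x = b y := fun h => hy (P1.symm.trans h)
      have nP3 : ¬ b x = a y := fun h => hx (P1.trans h.symm)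
      have nP4 : ¬ b x = b y := fun h => hp (Or.inl ⟨P1, h⟩)
      left
      refine ⟨⟨a x, Or.inl rfl, Or.inl P1⟩, ?_⟩
      rw [hinner x y, if_pos P1, if_neg nP2, if_neg nP3, if_neg nP4]; norm_num
    · by_cases P2 : a x = b y
      · have nP3 : ¬ b x = a y := fun h => hp (Or.inr ⟨P2, h⟩)
        have nP4 : ¬ b x = b y := fun h => hx (P2.trans h.symm)
        left
        refine ⟨⟨a x, Or.inl rfl, Or.inr P2⟩, ?_⟩
        rw [hinner x y, if_neg P1, if_pos P2, if_neg nP3, if_neg nP4]; norm_num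
      · by_cases P3 : b x = a y
        · have nP4 : ¬ b x = b y := fun h => hy (P3.symm.trans h)
          left
          refine ⟨⟨b x, Or.inr rfl, Or.inl P3⟩, ?_⟩
          rw [hinner x y, if_neg P1, if_neg P2, if_pos P3, if_neg nP4]; norm_num
        · by_cases P4 : b x = b y
          · left
            refine ⟨⟨b x, Or.inr rfl, Or.inr P4⟩, ?_⟩
            rw [hinner x y, if_neg P1, if_neg P2, if_neg P3, if_pos P4]; norm_num
          · right
            constructor
            · rintro ⟨v, h1 | h1, h2 | h2⟩ <;> subst h1 <;>
                first | exact P1 h2 | exact P2 h2 | exact P3 h2 | exact P4 h2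
            · rw [hinner x y, if_neg P1, if_neg P2, if_neg P3, if_neg P4]; norm_num
  have hBne : ∀ x y : X, x ≠ y →
      (∃ v, (v = a x ∨ v = b x) ∧ (v = a y ∨ v = b y)) → B x y ≠ 0 := by
    intro x y hxy hsh hB0
    have h := hcomp x y hxy
    rw [hB0] at h
    rcases hval x y hxy with ⟨_, h1 | h1⟩ | ⟨hns, _⟩
    · rw [h1] at h; norm_num at h
    · rw [h1] at h; norm_num at h
    · exact hns hsh
  have hBz : ∀ x y : X, x ≠ y →
      (∀ v, ¬((v = a x ∨ v = b x) ∧ (v = a y ∨ v = b y))) → B x y = 0 := by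
    intro x y hxy hns
    have h := hcomp x y hxy
    rcases hval x y hxy with ⟨⟨v, hv⟩, _⟩ | ⟨_, h1⟩
    · exact absurd hv (hns v)
    · rw [h1] at h
      norm_num at h
      have h2 : |B x y| = 0 := by exact_mod_cast h.symm
      exact abs_eq_zero.mp h2
  have hBshare : ∀ x y : X, x ≠ y → B x y ≠ 0 →
      ∃ v, (v = a x ∨ v = b x) ∧ (v = a y ∨ v = b y) := by
    intro x y hxy hB
    by_contra hns
    push_neg at hns
    refine hB (hBz x y hxy ?_)
    rintro v ⟨hv1, hv2⟩
    rcases hv2 with h2 | h2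
    · exact (hns v hv1).1 h2
    · exact (hns v hv1).2 h2
  -- the graph
  let G : SimpleGraph (Fin (n + 1)) :=
    { Adj := fun i j => i ≠ j ∧ ∃ x, s(a x, b x) = s(i, j)
      symm := ⟨by
        rintro i j ⟨hne, x, hx⟩
        exact ⟨hne.symm, x, hx.trans (Sym2.eq_swap)⟩⟩
      loopless := ⟨fun i h => h.1 rfl⟩ }
  have hAdjG : ∀ i j, G.Adj i j → ∃ x, s(a x, b x) = s(i, j) := fun i j h => h.2
  -- connectivity
  have hGconn : ∀ i j : Fin (n + 1), G.Reachable i j := by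
    intro i j
    by_cases hij : i = j
    · exact hij ▸ SimpleGraph.Reachable.refl i
    · by_contra hnr
      set T : Finset (Fin (n + 1)) := Finset.univ.filter (fun k => G.Reachable i k) with hT
      have hmemT : ∀ k, k ∈ T ↔ G.Reachable i k := by intro k; simp [hT]
      have hiT : i ∈ T := (hmemT i).2 (SimpleGraph.Reachable.refl i)
      have hjT : j ∉ T := fun h => hnr ((hmemT j).1 h)
      have hedge : ∀ x : X, (a x ∈ T ↔ b x ∈ T) := by
        intro x
        have hadj : G.Adj (a x) (b x) := ⟨hab x, x, rfl⟩
        constructor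
        · intro h; exact (hmemT _).2 (((hmemT _).1 h).trans hadj.reachable)
        · intro h; exact (hmemT _).2 (((hmemT _).1 h).trans hadj.symm.reachable)
      obtain ⟨c, hc⟩ := hspan (eA n i - eA n j) ⟨i, j, hij, rfl⟩
      have h1 : ∑ k ∈ T, ⟪eA n k, eA n i - eA n j⟫ = 1 := by
        have hterm : ∀ k, ⟪eA n k, eA n i - eA n j⟫
            = (if k = i then (1:ℝ) else 0) - (if k = j then 1 else 0) := by
          intro k; rw [inner_sub_right, stmt18aux_hee, stmt18aux_hee]
        rw [Finset.sum_congr rfl (fun k _ => hterm k), Finset.sum_sub_distrib,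
          Finset.sum_ite_eq' T i (fun _ => (1:ℝ)), Finset.sum_ite_eq' T j (fun _ => (1:ℝ))]
        rw [if_pos hiT, if_neg hjT]
        norm_num
      have h2 : ∑ k ∈ T, ⟪eA n k, eA n i - eA n j⟫ = 0 := by
        rw [hc]
        calc ∑ k ∈ T, ⟪eA n k, ∑ x, (c x : ℝ) • γ x⟫
            = ∑ k ∈ T, ∑ x, (c x : ℝ) * ⟪eA n k, γ x⟫ := by
              refine Finset.sum_congr rfl fun k _ => ?_
              rw [inner_sum]
              exact Finset.sum_congr rfl fun x _ => real_inner_smul_right _ _ _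
          _ = ∑ x, (c x : ℝ) * ∑ k ∈ T, ⟪eA n k, γ x⟫ := by
              rw [Finset.sum_comm]
              exact Finset.sum_congr rfl fun x _ => (Finset.mul_sum _ _ _).symm
          _ = 0 := by
              apply Finset.sum_eq_zero; intro x _
              have hzero : ∑ k ∈ T, ⟪eA n k, γ x⟫ = 0 := by
                have hterm : ∀ k, ⟪eA n k, γ x⟫
                    = (if k = a x then (1:ℝ) else 0) - (if k = b x then 1 else 0) := by
                  intro k; rw [hγab x, inner_sub_right, stmt18aux_hee, stmt18aux_hee]
                rw [Finset.sum_congr rfl (fun k _ => hterm k), Finset.sum_sub_distrib,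
                  Finset.sum_ite_eq' T (a x) (fun _ => (1:ℝ)),
                  Finset.sum_ite_eq' T (b x) (fun _ => (1:ℝ))]
                by_cases haT : a x ∈ T
                · rw [if_pos haT, if_pos ((hedge x).1 haT)]; norm_num
                · rw [if_neg haT, if_neg (fun h => haT ((hedge x).2 h))]; norm_num
              rw [hzero, mul_zero]
      rw [h2] at h1
      norm_num at h1
  -- key expansion: every root expands over a string
  have hkey : ∀ i j : Fin (n + 1), i ≠ j → ∃ (c : X → ℤ) (t : ℕ) (x : ℕ → X),
      (eA n i - eA n j = ∑ z, (c z : ℝ) • γ z) ∧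
      (∀ z, c z = 0 ∨ c z = 1 ∨ c z = -1) ∧
      (∀ k l, k ≤ t → l ≤ t → x k = x l → k = l) ∧
      (∀ k, k + 1 ≤ t → B (x k) (x (k + 1)) ≠ 0) ∧
      (∀ k l, k + 2 ≤ l → l ≤ t → B (x k) (x l) = 0) ∧
      {y | ∃ k, k ≤ t ∧ x k = y} = {z | c z ≠ 0} := by
    intro i j hij
    obtain ⟨w, hw⟩ : ∃ w : G.Walk i j, w.IsPath := by
      obtain ⟨w0⟩ := hGconn i j
      exact ⟨(w0.toPath : G.Path i j).1, (w0.toPath : G.Path i j).2⟩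
    obtain ⟨c, hcsum, hcsupp, hcval⟩ :=
      stmt18aux_pathExpand γ a b hγab hEinj hAdjG w hw.edges_nodup
    obtain ⟨t, x, hinj, hBc, hBf, hset, _⟩ :=
      stmt18aux_pathString B a b hEinj hAdjG hBne hBz w hw hij
    refine ⟨c, t, x, hcsum, hcval, hinj, hBc, hBf, ?_⟩
    rw [hset]
    ext z
    exact (hcsupp z).symm
  -- li uniqueness of coefficients
  have hliU : ∀ c d : X → ℤ, ∑ z, (c z : ℝ) • γ z = ∑ z, (d z : ℝ) • γ z → c = d :=
    fun c d h => stmt18aux_li_eq hli c d h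
    -- Goal 1 workhorse: from a string, construct the positive root
  have hG1 : ∀ (s : Set X) (p q : X), IsStringBetween B s p q →
      ∃ (α : EuclideanSpace ℝ (Fin (n + 1))) (cP : X → ℤ),
        α ∈ posRootsA n ∧ (α = ∑ z, (cP z : ℝ) • γ z) ∧ (s = {z | cP z ≠ 0}) ∧
        (∀ z, (cP z).natAbs = s.indicator (fun _ => 1) z) ∧
        (∀ β, β ∈ posRootsA n → SuppIs γ β s → β = α) := by
    rintro s p q ⟨t, x, hinj, hBc, hBf, hx0, hxt, hs⟩
    obtain ⟨v, hvP, hvinj⟩ := stmt18aux_stringOrient a b hab t x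
      (fun k l hk hl hkl => hpairne (x k) (x l) (fun h => hkl (hinj k l hk hl h)))
      (fun k hk => hBshare (x k) (x (k + 1))
        (fun h => by have := hinj k (k + 1) (by omega) hk h; omega) (hBc k hk))
      (fun k l hkl hl w hw => hBne (x k) (x l)
        (fun h => by have := hinj k l (le_trans (by omega) hl) hl h; omega)
        ⟨w, hw.1, hw.2⟩ (hBf k l hkl hl))
    set σ : ℕ → ℤ := fun k => if v k = a (x k) then 1 else -1 with hσdef
    have hσval : ∀ k, σ k = 1 ∨ σ k = -1 := by
      intro k; rw [hσdef]; beta_reduce; split_ifs <;> simp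
    have hveq : ∀ k, k ≤ t → ((σ k : ℝ)) • γ (x k) = eA n (v k) - eA n (v (k + 1)) := by
      intro k hk
      rcases hvP k hk with ⟨h1, h2⟩ | ⟨h1, h2⟩
      · rw [hσdef]; beta_reduce
        rw [if_pos h1, hγab (x k), ← h1, ← h2]
        push_cast; module
      · have hne : v k ≠ a (x k) := by rw [h1]; exact fun h => hab (x k) h.symm
        rw [hσdef]; beta_reduce
        rw [if_neg hne, hγab (x k), ← h1, ← h2]
        push_cast; module
    have hv0t : v 0 ≠ v (t + 1) := fun h => by
      have := hvinj 0 (t + 1) (by omega) (by omega) h; omega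
    set ε : ℤ := if v 0 < v (t + 1) then 1 else -1 with hεdef
    have hεval : ε = 1 ∨ ε = -1 := by rw [hεdef]; split_ifs <;> simp
    set α : EuclideanSpace ℝ (Fin (n + 1)) :=
      if v 0 < v (t + 1) then eA n (v 0) - eA n (v (t + 1))
      else eA n (v (t + 1)) - eA n (v 0) with hαdef
    have hαpos : α ∈ posRootsA n := by
      rw [hαdef]; split_ifs with h
      · exact ⟨v 0, v (t + 1), h, rfl⟩
      · exact ⟨v (t + 1), v 0, (not_lt.mp h).lt_of_ne hv0t.symm, rfl⟩
    have hαε : α = (ε : ℝ) • (eA n (v 0) - eA n (v (t + 1))) := by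
      rw [hαdef, hεdef]; split_ifs <;> push_cast <;> module
    have htel : ∑ k ∈ Finset.range (t + 1), (eA n (v k) - eA n (v (k + 1)))
        = eA n (v 0) - eA n (v (t + 1)) := Finset.sum_range_sub' (fun k => eA n (v k)) (t + 1)
    have hs' : ∀ z, z ∈ s ↔ ∃ k, k ≤ t ∧ x k = z := by
      intro z; rw [hs]; exact Iff.rfl
    have hswap : ∀ e : ℕ → ℤ,
        ∑ z, ((∑ k ∈ Finset.range (t + 1), if x k = z then e k else 0 : ℤ) : ℝ) • γ z
          = ∑ k ∈ Finset.range (t + 1), (e k : ℝ) • γ (x k) := by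
      intro e
      have step1 : ∀ z : X,
          ((∑ k ∈ Finset.range (t + 1), if x k = z then e k else 0 : ℤ) : ℝ) • γ z
            = ∑ k ∈ Finset.range (t + 1), (if x k = z then (e k : ℝ) • γ z else 0) := by
        intro z
        rw [Int.cast_sum, Finset.sum_smul]
        refine Finset.sum_congr rfl fun k _ => ?_
        split_ifs <;> simp
      rw [Finset.sum_congr rfl fun z _ => step1 z, Finset.sum_comm]
      refine Finset.sum_congr rfl fun k _ => ?_
      rw [Finset.sum_ite_eq Finset.univ (x k) (fun z => (e k : ℝ) • γ z)]
      simp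
    have hsingle : ∀ (e : ℕ → ℤ) (z : X) (k0 : ℕ), k0 ≤ t → x k0 = z →
        (∑ k ∈ Finset.range (t + 1), if x k = z then e k else 0) = e k0 := by
      intro e z k0 hk0 hxz
      rw [Finset.sum_eq_single_of_mem k0 (Finset.mem_range.2 (by omega))]
      · rw [if_pos hxz]
      · intro k hk hne
        have hk' : k ≤ t := by have := Finset.mem_range.1 hk; omega
        exact if_neg (fun hxe => hne (hinj k k0 hk' hk0 (hxe.trans hxz.symm)))
    have hzero : ∀ (e : ℕ → ℤ) (z : X), z ∉ s →
        (∑ k ∈ Finset.range (t + 1), if x k = z then e k else 0) = 0 := by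
      intro e z hz
      apply Finset.sum_eq_zero
      intro k hk
      have hk' : k ≤ t := by have := Finset.mem_range.1 hk; omega
      exact if_neg (fun hxe => hz ((hs' z).2 ⟨k, hk', hxe⟩))
    set cP : X → ℤ := fun z => ∑ k ∈ Finset.range (t + 1), if x k = z then ε * σ k else 0
      with hcPdef
    have hcPsum : α = ∑ z, (cP z : ℝ) • γ z := by
      rw [hcPdef]
      rw [hswap (fun k => ε * σ k)]
      have hterm : ∀ k ∈ Finset.range (t + 1),
          ((ε * σ k : ℤ) : ℝ) • γ (x k) = (ε : ℝ) • (eA n (v k) - eA n (v (k + 1))) := by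
        intro k hk
        have hk' : k ≤ t := by have := Finset.mem_range.1 hk; omega
        rw [← hveq k hk']
        push_cast
        rw [smul_smul]
      rw [Finset.sum_congr rfl hterm, ← Finset.smul_sum, htel, ← hαε]
    have hcPval : ∀ (z : X) (k0 : ℕ), k0 ≤ t → x k0 = z → cP z = ε * σ k0 := by
      intro z k0 hk0 hxz
      rw [hcPdef]
      exact hsingle (fun k => ε * σ k) z k0 hk0 hxz
    have hcPsupp : s = {z | cP z ≠ 0} := by
      ext z
      simp only [Set.mem_setOf_eq]
      constructor
      · intro hz
        obtain ⟨k0, hk0, hxz⟩ := (hs' z).1 hz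
        rw [hcPval z k0 hk0 hxz]
        rcases hεval with h | h <;> rcases hσval k0 with h' | h' <;> rw [h, h'] <;> norm_num
      · intro hz
        by_contra hzs
        rw [hcPdef] at hz
        exact hz (hzero _ z hzs)
    have hcPnat : ∀ z, (cP z).natAbs = s.indicator (fun _ => 1) z := by
      intro z
      rw [Set.indicator_apply]
      by_cases hz : z ∈ s
      · rw [if_pos hz]
        obtain ⟨k0, hk0, hxz⟩ := (hs' z).1 hz
        rw [hcPval z k0 hk0 hxz]
        rcases hεval with h | h <;> rcases hσval k0 with h' | h' <;> rw [h, h'] <;> rfl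
      · rw [if_neg hz, hcPdef]
        beta_reduce
        rw [hzero _ z hz]
        rfl
    refine ⟨α, cP, hαpos, hcPsum, hcPsupp, hcPnat, ?_⟩
    rintro β ⟨i', j', hij', rfl⟩ ⟨d, hd, hds⟩
    have hij'ne : i' ≠ j' := ne_of_lt hij'
    obtain ⟨c', t', x', hc'sum, hc'val, _, _, _, _⟩ := hkey i' j' hij'ne
    have hdc' : d = c' := hliU d c' (hd.symm.trans hc'sum)
    have hdval : ∀ z, d z = 0 ∨ d z = 1 ∨ d z = -1 := by rw [hdc']; exact hc'val
    set τ : ℕ → ℤ := fun k => d (x k) * σ k with hτdef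
    have hxks : ∀ k, k ≤ t → d (x k) ≠ 0 := by
      intro k hk
      have hmem : x k ∈ s := (hs' (x k)).2 ⟨k, hk, rfl⟩
      rw [hds] at hmem
      exact hmem
    have hτval : ∀ k, k ≤ t → τ k = 1 ∨ τ k = -1 := by
      intro k hk
      rcases hdval (x k) with h | h | h
      · exact absurd h (hxks k hk)
      · rcases hσval k with h' | h' <;> rw [hτdef] <;> beta_reduce <;> rw [h, h'] <;> norm_num
      · rcases hσval k with h' | h' <;> rw [hτdef] <;> beta_reduce <;> rw [h, h'] <;> norm_num
    have hβsum : eA n i' - eA n j'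
        = ∑ k ∈ Finset.range (t + 1), (τ k : ℝ) • (eA n (v k) - eA n (v (k + 1))) := by
      rw [hd]
      have h1 : ∑ z, (d z : ℝ) • γ z
          = ∑ z, ((∑ k ∈ Finset.range (t + 1), if x k = z then d (x k) else 0 : ℤ) : ℝ) • γ z := by
        refine Finset.sum_congr rfl fun z _ => ?_
        congr 1
        by_cases hz : z ∈ s
        · obtain ⟨k0, hk0, hxz⟩ := (hs' z).1 hz
          rw [hsingle (fun k => d (x k)) z k0 hk0 hxz, hxz]
        · rw [hzero (fun k => d (x k)) z hz]
          have hdz : d z = 0 := by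
            by_contra h
            exact hz (by rw [hds]; exact h)
          rw [hdz]
      rw [h1, hswap (fun k => d (x k))]
      refine Finset.sum_congr rfl fun k hk => ?_
      have hk' : k ≤ t := by have := Finset.mem_range.1 hk; omega
      rw [← hveq k hk', smul_smul, hτdef]
      beta_reduce
      rcases hσval k with h' | h' <;> rw [h'] <;> push_cast <;> module
    have hτstep : ∀ k, k + 1 ≤ t → τ (k + 1) = τ k := by
      intro k hk
      have heval := congrArg (fun w => ⟪eA n (v (k + 1)), w⟫) hβsum
      beta_reduce at heval
      rw [inner_sub_right, stmt18aux_hee, stmt18aux_hee, inner_sum] at heval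
      have hterm : ∀ m ∈ Finset.range (t + 1),
          ⟪eA n (v (k + 1)), (τ m : ℝ) • (eA n (v m) - eA n (v (m + 1)))⟫
            = (if m = k + 1 then (τ m : ℝ) else 0) - (if m = k then (τ m : ℝ) else 0) := by
        intro m hm
        have hm' : m ≤ t := by have := Finset.mem_range.1 hm; omega
        rw [real_inner_smul_right, inner_sub_right, stmt18aux_hee, stmt18aux_hee]
        have e1 : (v (k + 1) = v m) ↔ (m = k + 1) := by
          constructor
          · intro h; exact (hvinj (k + 1) m (by omega) (by omega) h).symm
          · intro h; rw [h]
        have e2 : (v (k + 1) = v (m + 1)) ↔ (m = k) := by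
          constructor
          · intro h; have := hvinj (k + 1) (m + 1) (by omega) (by omega) h; omega
          · intro h; rw [h]
        by_cases h1 : m = k + 1
        · rw [if_pos (e1.2 h1), if_neg (fun h => by have := e2.1 h; omega),
            if_pos h1, if_neg (by omega)]
          ring
        · by_cases h2 : m = k
          · rw [if_neg (fun h => h1 (e1.1 h)), if_pos (e2.2 h2), if_neg h1, if_pos h2]
            ring
          · rw [if_neg (fun h => h1 (e1.1 h)), if_neg (fun h => h2 (e2.1 h)),
              if_neg h1, if_neg h2]
            ring
      rw [Finset.sum_congr rfl hterm, Finset.sum_sub_distrib,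
        Finset.sum_ite_eq' (Finset.range (t + 1)) (k + 1) (fun m => (τ m : ℝ)),
        Finset.sum_ite_eq' (Finset.range (t + 1)) k (fun m => (τ m : ℝ)),
        if_pos (Finset.mem_range.2 (by omega)), if_pos (Finset.mem_range.2 (by omega))] at heval
      rcases hτval (k + 1) (by omega) with h1 | h1 <;>
        rcases hτval k (by omega) with h2 | h2 <;> rw [h1, h2] <;>
        first
          | rfl
          | (exfalso; rw [h1, h2] at heval; split_ifs at heval <;> norm_num at heval)
    have hτ0 : ∀ k, k ≤ t → τ k = τ 0 := by
      intro k
      induction k with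
      | zero => intro _; rfl
      | succ m ih => intro hk; rw [hτstep m hk]; exact ih (by omega)
    have hβ2 : eA n i' - eA n j' = (τ 0 : ℝ) • (eA n (v 0) - eA n (v (t + 1))) := by
      rw [hβsum, ← htel, Finset.smul_sum]
      refine Finset.sum_congr rfl fun k hk => ?_
      have hk' : k ≤ t := by have := Finset.mem_range.1 hk; omega
      rw [hτ0 k hk']
    rcases hτval 0 (by omega) with h0 | h0
    · rw [h0] at hβ2
      push_cast at hβ2
      rw [one_smul] at hβ2
      obtain ⟨hi, hj⟩ := stmt18aux_eA_inj hij'ne hβ2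
      rw [hαdef, if_pos (hi ▸ hj ▸ hij')]
      exact hβ2
    · rw [h0] at hβ2
      push_cast at hβ2
      rw [neg_smul, one_smul, neg_sub] at hβ2
      obtain ⟨hi, hj⟩ := stmt18aux_eA_inj hij'ne hβ2
      have hlt : v (t + 1) < v 0 := hi ▸ hj ▸ hij'
      rw [hαdef, if_neg (lt_asymm hlt)]
      exact hβ2
  -- final assembly
  refine ⟨?_, ?_, ?_⟩
  · rintro s ⟨p, q, hstr⟩
    obtain ⟨α, cP, hαpos, hαsum, hsupp, _, huniq⟩ := hG1 s p q hstr
    refine ⟨α, ⟨hαpos, cP, hαsum, hsupp⟩, ?_⟩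
    rintro β ⟨hβpos, hβsupp⟩
    exact huniq β hβpos hβsupp
  · rintro α ⟨i, j, hij, rfl⟩
    obtain ⟨c, t, x, hsum, hcval, hinj, hBc, hBf, hset⟩ := hkey i j (ne_of_lt hij)
    refine ⟨{y | ∃ k, k ≤ t ∧ x k = y},
      ⟨⟨x 0, x t, t, x, hinj, hBc, hBf, rfl, rfl, rfl⟩, c, hsum, hset⟩, ?_⟩
    rintro s' ⟨_, d, hdsum, hds⟩
    have hdc : d = c := hliU d c (hdsum.symm.trans hsum)
    rw [hds, hdc, ← hset]
  · ext dv
    simp only [Set.mem_setOf_eq]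
    constructor
    · rintro ⟨α, ⟨i, j, hij, rfl⟩, c, hcsum, rfl⟩
      obtain ⟨c', t, x, hsum, hcval, hinj, hBc, hBf, hset⟩ := hkey i j (ne_of_lt hij)
      have hcc : c = c' := hliU c c' (hcsum.symm.trans hsum)
      refine ⟨{y | ∃ k, k ≤ t ∧ x k = y}, x 0, x t,
        ⟨t, x, hinj, hBc, hBf, rfl, rfl, rfl⟩, ?_⟩
      funext z
      rw [Set.indicator_apply]
      by_cases hz : z ∈ {y | ∃ k, k ≤ t ∧ x k = y}
      · rw [if_pos hz]
        have hz' : c' z ≠ 0 := by rw [hset] at hz; exact hz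
        rcases hcval z with h | h | h
        · exact absurd h hz'
        · rw [hcc, h]; rfl
        · rw [hcc, h]; rfl
      · rw [if_neg hz]
        have hz0 : c' z = 0 := by
          by_contra h
          exact hz (by rw [hset]; exact h)
        rw [hcc, hz0]; rfl
    · rintro ⟨s, p, q, hstr, rfl⟩
      obtain ⟨α, cP, hαpos, hαsum, _, hnat, _⟩ := hG1 s p q hstr
      refine ⟨α, hαpos, cP, hαsum, ?_⟩
      funext z
      rw [hnat z]
end
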